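/- arXiv:math/0603106 — 7 statements merged into one kernel-verified Lean document; each statement's English description precedes it below -/
import Mathlib

section
/- Every cycle C[m] with m ≥ 3 vertices is antimagic: there exists a bijection f from the edge set of the cycle to {1,...,m} such that all vertex sums are pairwise distinct. -/
open Finset SimpleGraph

open scoped Classical in
/-- The sum of the labels of all edges incident to `v`. -/
noncomputable def vertexSum {V : Type*} [Fintype V] (G : SimpleGraph V)
    (f : Sym2 V → ℕ) (v : V) : ℕ :=
  ∑ w ∈ Finset.univ.filter (fun w => G.Adj v w), f s(v, w)

/-- A graph with `q` edges is antimagic if there is a bijection from its edge set to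
`{1, …, q}` such that all induced vertex sums are pairwise distinct. -/
noncomputable def IsAntimagic {V : Type*} [Fintype V] (G : SimpleGraph V) : Prop :=
  ∃ f : Sym2 V → ℕ, Set.BijOn f G.edgeSet (Set.Icc 1 G.edgeSet.ncard) ∧
    Function.Injective (vertexSum G f)

/- ### Auxiliary lemmas -/

lemma cyc_two_ne_zero (n : ℕ) : (1 + 1 : Fin (n+3)) ≠ 0 := by
  intro h
  have h3 := congrArg Fin.val h
  rw [Fin.val_add, Fin.val_one, Fin.val_zero] at h3
  rw [Nat.mod_eq_of_lt (by omega)] at h3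
  exact absurd h3 (by omega)

lemma cyc_succ_succ_ne (n : ℕ) (i : Fin (n+3)) : i + 1 + 1 ≠ i := by
  intro h
  rw [add_assoc] at h
  exact cyc_two_ne_zero n (add_left_cancel (a := i) (b := (1+1 : Fin (n+3))) (c := 0)
    (by rw [add_zero]; exact h))

lemma cyc_sub_one_ne_add_one (n : ℕ) (v : Fin (n+3)) : v - 1 ≠ v + 1 := by
  intro h
  have h2 : v + (-1) = v + 1 := by rw [← sub_eq_add_neg]; exact h
  have h3 : (-1 : Fin (n+3)) = 1 := add_left_cancel h2
  have h4 : (1 : Fin (n+3)) + 1 = 1 + (-1) := by rw [h3]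
  rw [add_neg_cancel] at h4
  exact cyc_two_ne_zero n h4

lemma cyc_val_sub_one (n : ℕ) (v : Fin (n+3)) :
    (v - 1).val = if v.val = 0 then n + 2 else v.val - 1 := by
  have h0 : (v - 1).val = (n + 3 - 1 + v.val) % (n+3) := by
    simp [Fin.sub_def]
  rw [h0]
  split_ifs with h
  · rw [h, Nat.add_zero, Nat.mod_eq_of_lt (by omega)]; omega
  · have h2 : n + 3 - 1 + v.val = (n+3) + (v.val - 1) := by omega
    rw [h2, Nat.add_mod_left, Nat.mod_eq_of_lt (by omega)]

lemma cyc_adj_iff (n : ℕ) (u v : Fin (n+3)) :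
    (SimpleGraph.cycleGraph (n+3)).Adj u v ↔ u = v + 1 ∨ v = u + 1 := by
  have h := @SimpleGraph.cycleGraph_adj (n+1) u v
  rw [h, sub_eq_iff_eq_add', sub_eq_iff_eq_add']

/-- The edge labels: odds increasing, then evens decreasing. -/
def cycB (m i : ℕ) : ℕ := if i < (m+1)/2 then 2*i+1 else 2*(m-i)

lemma cycB_mem (m i : ℕ) (hi : i < m) : cycB m i ∈ Set.Icc 1 m := by
  simp only [cycB, Set.mem_Icc]
  split_ifs <;> omega

lemma cycB_inj (m : ℕ) {i j : ℕ} (hi : i < m) (hj : j < m)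
    (h : cycB m i = cycB m j) : i = j := by
  simp only [cycB] at h
  split_ifs at h <;> omega

lemma cycB_surj (m y : ℕ) (h1 : 1 ≤ y) (h2 : y ≤ m) : ∃ i, i < m ∧ cycB m i = y := by
  rcases Nat.even_or_odd y with ⟨k, rfl⟩ | ⟨k, rfl⟩
  · refine ⟨m - k, by omega, ?_⟩
    simp only [cycB]
    split_ifs <;> omega
  · refine ⟨k, by omega, ?_⟩
    simp only [cycB]
    split_ifs <;> omega

/-- The labeling function on `Sym2`. -/
def cycF (n : ℕ) : Sym2 (Fin (n+3)) → ℕ :=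
  Sym2.lift ⟨fun i j => (if j = i+1 then cycB (n+3) i.val else 0) +
                        (if i = j+1 then cycB (n+3) j.val else 0),
    fun i j => add_comm _ _⟩

lemma cycF_edge (n : ℕ) (i : Fin (n+3)) : cycF n s(i, i+1) = cycB (n+3) i.val := by
  simp only [cycF, Sym2.lift_mk]
  rw [if_pos trivial, if_neg (fun h => cyc_succ_succ_ne n i h.symm), add_zero]

lemma cycT_inj (m : ℕ) (hm : 3 ≤ m) (x y : ℕ) (hx : x < m) (hy : y < m)
    (h : cycB m (if x = 0 then m - 1 else x - 1) + cycB m x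
       = cycB m (if y = 0 then m - 1 else y - 1) + cycB m y) : x = y := by
  simp only [cycB] at h
  split_ifs at h <;> omega

/-- Every cycle on `m ≥ 3` vertices is antimagic. -/
theorem cycle_isAntimagic (m : ℕ) (hm : 3 ≤ m) :
    IsAntimagic (cycleGraph m) := by
  obtain ⟨n, rfl⟩ : ∃ n, m = n + 3 := ⟨m - 3, by omega⟩
  set G := cycleGraph (n+3) with hG
  set e : Fin (n+3) → Sym2 (Fin (n+3)) := fun i => s(i, i+1) with he
  have hfe : ∀ i, cycF n (e i) = cycB (n+3) i.val := fun i => cycF_edge n i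
  have hE : G.edgeSet = Set.range e := by
    ext x
    induction x using Sym2.ind with
    | _ u v =>
      rw [SimpleGraph.mem_edgeSet, cyc_adj_iff]
      constructor
      · rintro (h | h)
        · exact ⟨v, by rw [h, he]; exact Sym2.eq_swap⟩
        · exact ⟨u, by rw [h, he]⟩
      · rintro ⟨i, hi⟩
        rw [he] at hi
        simp only [Sym2.eq, Sym2.rel_iff', Prod.mk.injEq, Prod.swap_prod_mk] at hi
        rcases hi with ⟨h1, h2⟩ | ⟨h1, h2⟩
        · right; rw [← h1, ← h2]
        · left; rw [← h1, ← h2]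
  have einj : Function.Injective e := by
    intro i j h
    rw [he] at h
    simp only [Sym2.eq, Sym2.rel_iff', Prod.mk.injEq, Prod.swap_prod_mk] at h
    rcases h with ⟨h1, h2⟩ | ⟨h1, h2⟩
    · exact h1
    · exfalso
      apply cyc_succ_succ_ne n i
      rw [h2, ← h1]
  have hcard : G.edgeSet.ncard = n + 3 := by
    rw [hE, ← Set.image_univ, Set.ncard_image_of_injective _ einj, Set.ncard_univ,
      Nat.card_eq_fintype_card, Fintype.card_fin]
  have hvs : ∀ v : Fin (n+3),
      vertexSum G (cycF n) v = cycB (n+3) (v-1).val + cycB (n+3) v.val := by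
    intro v
    have hfilter : (Finset.univ.filter (fun w => G.Adj v w)) = {v - 1, v + 1} := by
      ext w
      simp only [Finset.mem_filter, Finset.mem_univ, true_and, Finset.mem_insert,
        Finset.mem_singleton]
      rw [cyc_adj_iff]
      constructor
      · rintro (h | h)
        · left; exact eq_sub_of_add_eq h.symm
        · right; exact h
      · rintro (h | h)
        · left; rw [h, sub_add_cancel]
        · right; exact h
    rw [vertexSum, Finset.filter_congr_decidable, hfilter,
      Finset.sum_pair (cyc_sub_one_ne_add_one n v)]
    congr 1
    · have hsw : s(v, v - 1) = e (v - 1) := by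
        rw [Sym2.eq_swap, he]
        simp only
        rw [sub_add_cancel]
      rw [hsw, hfe]
    · exact hfe v
  refine ⟨cycF n, ?_, ?_⟩
  · rw [hcard, hE]
    refine ⟨?_, ?_, ?_⟩
    · rintro x ⟨i, rfl⟩
      rw [hfe]
      exact cycB_mem _ _ i.isLt
    · rintro x ⟨i, rfl⟩ y ⟨j, rfl⟩ h
      rw [hfe, hfe] at h
      rw [Fin.ext (cycB_inj _ i.isLt j.isLt h)]
    · intro y hy
      obtain ⟨i, hilt, hbi⟩ := cycB_surj (n+3) y hy.1 hy.2
      exact ⟨e ⟨i, hilt⟩, ⟨⟨i, hilt⟩, rfl⟩, by rw [hfe]; exact hbi⟩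
  · intro v w h
    rw [hvs, hvs, cyc_val_sub_one, cyc_val_sub_one] at h
    exact Fin.ext (cycT_inj (n+3) (by omega) v.val w.val v.isLt w.isLt h)
end

section
/- For the path with vertices v_1,...,v_{m+1} (m ≥ 2) and edge set {v_i v_{i+2} : 1 ≤ i ≤ m-1} ∪ {v_m v_{m+1}}, the labeling f(v_i v_{i+2}) = i for 1 ≤ i ≤ m-1 and f(v_m v_{m+1}) = m induces vertex sums f⁺(v_1) = 1, f⁺(v_2) = 2, f⁺(v_i) = 2i-2 for 3 ≤ i ≤ m, and f⁺(v_{m+1}) = 2m-1; in particular these sums are strictly increasing in i. -/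
open Finset SimpleGraph

/-- The path on vertices `v_1, …, v_{m+1}` (0-based: `0, …, m`) with edge set
`{v_i v_{i+2} : 1 ≤ i ≤ m-1} ∪ {v_m v_{m+1}}`. -/
def reindexedPath (m : ℕ) : SimpleGraph (Fin (m + 1)) :=
  SimpleGraph.fromRel (fun a b => (a : ℕ) + 2 = (b : ℕ) ∨ ((a : ℕ) = m - 1 ∧ (b : ℕ) = m))

/-!
In 0-based indexing, every vertex `u < m` has exactly one neighbour above it, namely
`min (u + 2) m`, and the edge between them carries the label `u + 1`. So the sum at `v` is
`v + 1` (for `v < m`) plus `u + 1` for each `u` with `min (u + 2) m = v`: there is no such `u`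
for `v ≤ 1`, only `u = v - 2` for `2 ≤ v < m`, and `u = m - 2, m - 1` for `v = m`. This gives
the sums `1, 2, 4, …, 2 (m - 1), 2 m - 1`.
-/

section VertexSum

variable {V : Type*} [Fintype V] (G : SimpleGraph V) (f : Sym2 V → ℕ) {v a b : V}

theorem vertexSum_eq_sum_of_adj_iff {s : Finset V} (h : ∀ w, G.Adj v w ↔ w ∈ s) :
    vertexSum G f v = ∑ w ∈ s, f s(v, w) := by
  classical
  unfold vertexSum
  congr 1
  ext w
  simp [h]

theorem vertexSum_eq_of_adj_iff_eq (h : ∀ w, G.Adj v w ↔ w = a) :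
    vertexSum G f v = f s(v, a) := by
  rw [vertexSum_eq_sum_of_adj_iff G f (s := {a}) (by simpa using h), sum_singleton]

theorem vertexSum_eq_of_adj_iff_eq_or_eq (hab : a ≠ b)
    (h : ∀ w, G.Adj v w ↔ w = a ∨ w = b) :
    vertexSum G f v = f s(v, a) + f s(v, b) := by
  classical
  rw [vertexSum_eq_sum_of_adj_iff G f (s := {a, b}) (by simpa using h), sum_pair hab]

end VertexSum

section ReindexedPath

variable {m : ℕ}

theorem reindexedPath_adj_iff {v w : Fin (m + 1)} :
    (reindexedPath m).Adj v w ↔ ((v : ℕ) < m ∧ (w : ℕ) = min ((v : ℕ) + 2) m) ∨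
      ((w : ℕ) < m ∧ (v : ℕ) = min ((w : ℕ) + 2) m) := by
  simp only [reindexedPath, fromRel_adj, ne_eq, Fin.ext_iff]
  omega

theorem reindexedPath_adj_last_iff (hm : 2 ≤ m) (w : Fin (m + 1)) :
    (reindexedPath m).Adj (Fin.last m) w ↔
      w = ⟨m - 2, Nat.lt_succ_of_le (Nat.sub_le m 2)⟩ ∨
        w = ⟨m - 1, Nat.lt_succ_of_le (Nat.sub_le m 1)⟩ := by
  rw [reindexedPath_adj_iff, Fin.ext_iff, Fin.ext_iff]
  dsimp only [Fin.val_last]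
  omega

theorem reindexedPath_adj_iff_of_le_one (hm : 2 ≤ m) {j : ℕ} (hj : j < m + 1) (hj₁ : j ≤ 1)
    (w : Fin (m + 1)) :
    (reindexedPath m).Adj ⟨j, hj⟩ w ↔
      w = ⟨min (j + 2) m, Nat.lt_succ_of_le (min_le_right _ _)⟩ := by
  rw [reindexedPath_adj_iff, Fin.ext_iff]
  dsimp only
  omega

theorem reindexedPath_adj_iff_of_two_le_of_lt {j : ℕ} (hj : j < m + 1)
    (hj₂ : 2 ≤ j) (hjm : j < m) (w : Fin (m + 1)) :
    (reindexedPath m).Adj ⟨j, hj⟩ w ↔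
      w = ⟨j - 2, Nat.lt_of_le_of_lt (Nat.sub_le j 2) hj⟩ ∨
        w = ⟨min (j + 2) m, Nat.lt_succ_of_le (min_le_right _ _)⟩ := by
  rw [reindexedPath_adj_iff, Fin.ext_iff, Fin.ext_iff]
  dsimp only
  omega

theorem vertexSum_reindexedPath (hm : 2 ≤ m) {f : Sym2 (Fin (m + 1)) → ℕ}
    (hf : ∀ u w : Fin (m + 1), (u : ℕ) < m → (w : ℕ) = min ((u : ℕ) + 2) m →
      f s(u, w) = u + 1)
    (j : ℕ) (hj : j < m + 1) :
    vertexSum (reindexedPath m) f ⟨j, hj⟩ =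
      if j = 0 then 1 else if j = m then 2 * m - 1 else 2 * j := by
  have hf_swap (u w : Fin (m + 1)) (hu : (u : ℕ) < m) (hw : (w : ℕ) = min ((u : ℕ) + 2) m) :
      f s(w, u) = u + 1 := by
    rw [Sym2.eq_swap, hf u w hu hw]
  rcases (by omega : m = j ∨ j ≤ 1 ∨ 2 ≤ j ∧ j < m) with rfl | hj₁ | ⟨hj₂, hjm⟩
  · change vertexSum _ f (Fin.last m) = _
    rw [vertexSum_eq_of_adj_iff_eq_or_eq _ f (Fin.ne_of_val_ne (show m - 2 ≠ m - 1 by omega))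
        (reindexedPath_adj_last_iff hm),
      hf_swap ⟨m - 2, _⟩ (Fin.last m) (show m - 2 < m by omega)
        (show m = min (m - 2 + 2) m by omega),
      hf_swap ⟨m - 1, _⟩ (Fin.last m) (show m - 1 < m by omega)
        (show m = min (m - 1 + 2) m by omega),
      if_neg (by omega), if_pos rfl]
    dsimp only
    omega
  · rw [vertexSum_eq_of_adj_iff_eq _ f (reindexedPath_adj_iff_of_le_one hm hj hj₁),
      hf ⟨j, hj⟩ ⟨min (j + 2) m, _⟩ (show j < m by omega) rfl]
    dsimp only
    split_ifs <;> omega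
  · rw [vertexSum_eq_of_adj_iff_eq_or_eq _ f
        (Fin.ne_of_val_ne (show j - 2 ≠ min (j + 2) m by omega))
        (reindexedPath_adj_iff_of_two_le_of_lt hj hj₂ hjm),
      hf_swap ⟨j - 2, _⟩ ⟨j, hj⟩ (show j - 2 < m by omega)
        (show j = min (j - 2 + 2) m by omega),
      hf ⟨j, hj⟩ ⟨min (j + 2) m, _⟩ (show j < m by omega) rfl,
      if_neg (by omega), if_neg (by omega)]
    dsimp only
    omega

end ReindexedPath

/-- For the path with edge set `{v_i v_{i+2} : 1 ≤ i ≤ m-1} ∪ {v_m v_{m+1}}` (`m ≥ 2`),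
the labeling `f(v_i v_{i+2}) = i`, `f(v_m v_{m+1}) = m` induces vertex sums
`f⁺(v_1) = 1`, `f⁺(v_2) = 2`, `f⁺(v_i) = 2i - 2` for `3 ≤ i ≤ m`, and
`f⁺(v_{m+1}) = 2m - 1`; in particular the sums are strictly increasing in `i`. -/
theorem reindexedPath_labeling_sums (m : ℕ) (hm : 2 ≤ m)
    (f : Sym2 (Fin (m + 1)) → ℕ)
    (hf1 : ∀ i : ℕ, ∀ _h1 : 1 ≤ i, ∀ _h2 : i ≤ m - 1,
      f s((⟨i - 1, by omega⟩ : Fin (m + 1)), (⟨i + 1, by omega⟩ : Fin (m + 1))) = i)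
    (hf2 : f s((⟨m - 1, by omega⟩ : Fin (m + 1)), (⟨m, by omega⟩ : Fin (m + 1))) = m) :
    vertexSum (reindexedPath m) f ⟨0, by omega⟩ = 1 ∧
    vertexSum (reindexedPath m) f ⟨1, by omega⟩ = 2 ∧
    (∀ i : ℕ, ∀ _h3 : 3 ≤ i, ∀ _h4 : i ≤ m,
      vertexSum (reindexedPath m) f ⟨i - 1, by omega⟩ = 2 * i - 2) ∧
    vertexSum (reindexedPath m) f ⟨m, by omega⟩ = 2 * m - 1 ∧
    StrictMono (vertexSum (reindexedPath m) f) := by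
  have hup (u w : Fin (m + 1)) (hu : (u : ℕ) < m) (hw : (w : ℕ) = min ((u : ℕ) + 2) m) :
      f s(u, w) = u + 1 := by
    obtain ⟨u, hu'⟩ := u
    obtain ⟨w, hw'⟩ := w
    dsimp only at hu hw ⊢
    rcases le_or_gt (u + 2) m with h | h
    · obtain rfl : w = u + 2 := by omega
      simpa using hf1 (u + 1) (by omega) (by omega)
    · obtain rfl : u = m - 1 := by omega
      obtain rfl : w = m := by omega
      rw [hf2]
      omega
  have hsum := vertexSum_reindexedPath hm hup
  refine ⟨by rw [hsum, if_pos rfl], by rw [hsum, if_neg one_ne_zero, if_neg (by omega)],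
    fun i h3 h4 => ?_, by rw [hsum, if_neg (by omega), if_pos rfl],
    fun ⟨a, _⟩ ⟨b, _⟩ hab => ?_⟩
  · rw [hsum, if_neg (by omega), if_neg (by omega)]
    omega
  · have hab' : a < b := hab
    rw [hsum, hsum]
    split_ifs <;> omega
end

section
/- Every prism graph C[m] × P[n+1], the Cartesian product of a cycle on m ≥ 3 vertices and a path on n+1 vertices with n ≥ 1, is antimagic. -/
open Finset SimpleGraph

namespace PrismAux

/-- zigzag permutation of `[0, m)` -/
def zz (m i : ℕ) : ℕ := if i % 2 = 0 then i / 2 else m - 1 - i / 2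

/-- inverse of zigzag -/
def zinv (m r : ℕ) : ℕ := if 2 * r < m then 2 * r else 2 * (m - 1 - r) + 1

lemma zz_lt {m i : ℕ} (hm : 1 ≤ m) (hi : i < m) : zz m i < m := by
  unfold zz; split <;> omega

lemma zinv_lt {m r : ℕ} (hr : r < m) : zinv m r < m := by
  unfold zinv; split <;> omega

lemma zz_zinv {m r : ℕ} (hr : r < m) : zz m (zinv m r) = r := by
  unfold zz zinv; split <;> split <;> omega

lemma zz_inj {m i i' : ℕ} (hi : i < m) (hi' : i' < m) (h : zz m i = zz m i') : i = i' := by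
  unfold zz at h; split at h <;> split at h <;> omega

/-- previous index on the cycle -/
def mv (m x : ℕ) : ℕ := if x = 0 then m - 1 else x - 1

/-- next index on the cycle -/
def pv (m x : ℕ) : ℕ := if x = m - 1 then 0 else x + 1

lemma mv_lt {m x : ℕ} (hm : 1 ≤ m) (hx : x < m) : mv m x < m := by unfold mv; split <;> omega
lemma pv_lt {m x : ℕ} (hm : 1 ≤ m) (hx : x < m) : pv m x < m := by unfold pv; split <;> omega

def a0 (n : ℕ) : ℕ := if n % 4 = 1 then 0 else 1

/-- block unit for horizontal (cycle) edges at level `j` -/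
def al (n j : ℕ) : ℕ := if j = 0 then a0 n else if j = n then 1 - a0 n else 2 * (n - j) + 1

/-- block unit for vertical (path) edges between levels `j` and `j+1` -/
def be (n j : ℕ) : ℕ := 2 * (n - j)

/-- the cycle-permutation used at level `j` : anti-zigzag at boundary, zigzag inside -/
def sg (m n j i : ℕ) : ℕ := if j = 0 ∨ j = n then m - 1 - zz m i else zz m i

def hl (m n j i : ℕ) : ℕ := m * al n j + sg m n j i + 1

def vl (m n j i : ℕ) : ℕ := m * be n j + zz m i + 1

lemma al_le {n j : ℕ} (hn : 1 ≤ n) (hj : j ≤ n) : al n j ≤ 2 * n := by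
  unfold al a0; split_ifs <;> omega

lemma be_le {n j : ℕ} (hj : j < n) : be n j ≤ 2 * n := by unfold be; omega

lemma sg_lt {m n j i : ℕ} (hm : 1 ≤ m) (hi : i < m) : sg m n j i < m := by
  have := zz_lt hm hi; unfold sg; split <;> omega

/-- decompose equal block values -/
lemma blocks {m u r u' r' : ℕ} (hr : r < m) (hr' : r' < m)
    (h : m * u + r = m * u' + r') : u = u' ∧ r = r' := by
  rcases Nat.lt_trichotomy u u' with hc | hc | hc
  · have h2 : m * (u + 1) ≤ m * u' := Nat.mul_le_mul_left m hc
    rw [Nat.mul_succ] at h2; omega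
  · subst hc; omega
  · have h2 : m * (u' + 1) ≤ m * u := Nat.mul_le_mul_left m hc
    rw [Nat.mul_succ] at h2; omega

lemma al_inj {n j j' : ℕ} (hn : 1 ≤ n) (hj : j ≤ n) (hj' : j' ≤ n)
    (h : al n j = al n j') : j = j' := by
  unfold al a0 at h
  split_ifs at h <;> omega

lemma al_ne_be {n j j' : ℕ} (hn : 1 ≤ n) (hj : j ≤ n) (hj' : j' < n) :
    al n j ≠ be n j' := by
  unfold al be a0; split_ifs <;> omega

lemma be_inj {n j j' : ℕ} (hj : j < n) (hj' : j' < n) (h : be n j = be n j') : j = j' := by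
  unfold be at h; omega

lemma sg_inj {m n j i i' : ℕ} (hm : 1 ≤ m) (hi : i < m) (hi' : i' < m)
    (h : sg m n j i = sg m n j i') : i = i' := by
  have h1 := zz_lt hm hi; have h2 := zz_lt hm hi'
  unfold sg at h
  apply zz_inj hi hi'
  split at h <;> omega

end PrismAux

namespace PrismAux2
open PrismAux

/-- the "level constant" (in units of m) of the vertex sums at level `b` -/
def K (n b : ℕ) : ℕ :=
  if b = 0 then 2 * a0 n + 2 * n
  else if b = n then 2 * (1 - a0 n) + 2
  else 8 * (n - b) + 4

/-- relative vertex sum at a boundary level -/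
def gB (m a : ℕ) : ℕ := (m - 1 - zz m (mv m a)) + (m - 1 - zz m a) + zz m a

/-- relative vertex sum at an interior level -/
def gI (m a : ℕ) : ℕ := zz m (mv m a) + zz m a + 2 * zz m a

/-- closed formula for the vertex sum at vertex `(a, b)` -/
def S (m n a b : ℕ) : ℕ :=
  if b = 0 ∨ b = n then m * K n b + gB m a + 3 else m * K n b + gI m a + 4

set_option maxHeartbeats 1000000 in
lemma gB_bounds {m a : ℕ} (hm : 3 ≤ m) (ha : a < m) :
    m - 1 ≤ gB m a ∧ gB m a ≤ 2 * m - 2 := by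
  unfold gB zz mv; split_ifs <;> omega

set_option maxHeartbeats 1000000 in
lemma gI_bounds {m a : ℕ} (hm : 3 ≤ m) (ha : a < m) :
    1 ≤ gI m a ∧ gI m a ≤ 3 * m - 3 := by
  unfold gI zz mv; split_ifs <;> omega

set_option maxHeartbeats 1000000 in
lemma gB_inj {m a a' : ℕ} (hm : 3 ≤ m) (ha : a < m) (ha' : a' < m)
    (h : gB m a = gB m a') : a = a' := by
  unfold gB zz mv at h; split_ifs at h <;> omega

set_option maxHeartbeats 1000000 in
lemma gI_inj {m a a' : ℕ} (hm : 3 ≤ m) (ha : a < m) (ha' : a' < m)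
    (h : gI m a = gI m a') : a = a' := by
  unfold gI zz mv at h; split_ifs at h <;> omega

lemma K_inj {n b b' : ℕ} (hn : 1 ≤ n) (hb : b ≤ n) (hb' : b' ≤ n)
    (h : K n b = K n b') : b = b' := by
  unfold K a0 at h; split_ifs at h <;> omega

lemma mul_gap {m k k' d : ℕ} (h : k + d ≤ k') : m * k + m * d ≤ m * k' := by
  have := Nat.mul_le_mul_left m h; rw [Nat.mul_add] at this; omega

lemma K_gap2 {n b b' : ℕ} (hn : 1 ≤ n) (hb : b ≤ n) (hb' : b' ≤ n)
    (h : K n b < K n b') : K n b + 2 ≤ K n b' := by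
  unfold K a0 at h ⊢; split_ifs at h ⊢ <;> omega

lemma K_gap8 {n b b' : ℕ} (hn : 1 ≤ n) (hb : b ≤ n) (hb' : b' ≤ n)
    (c1 : ¬(b = 0 ∨ b = n)) (c2 : ¬(b' = 0 ∨ b' = n))
    (h : K n b < K n b') : K n b + 8 ≤ K n b' := by
  unfold K a0 at h ⊢; split_ifs at h ⊢ <;> omega

lemma no_overlap {m n a a' b b' : ℕ} (hm : 3 ≤ m) (hn : 1 ≤ n)
    (ha : a < m) (ha' : a' < m) (hb : b ≤ n) (hb' : b' ≤ n)
    (hK : K n b < K n b') : S m n a b < S m n a' b' := by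
  have hgB := gB_bounds hm ha
  have hgB' := gB_bounds hm ha'
  have hgI := gI_bounds hm ha
  have hgI' := gI_bounds hm ha'
  by_cases c1 : b = 0 ∨ b = n <;> by_cases c2 : b' = 0 ∨ b' = n
  · have := mul_gap (m := m) (K_gap2 hn hb hb' hK)
    simp only [S, if_pos c1, if_pos c2]; omega
  · have := mul_gap (m := m) (K_gap2 hn hb hb' hK)
    simp only [S, if_pos c1, if_neg c2]; omega
  · have := mul_gap (m := m) (K_gap2 hn hb hb' hK)
    simp only [S, if_neg c1, if_pos c2]; omega
  · have := mul_gap (m := m) (K_gap8 hn hb hb' c1 c2 hK)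
    simp only [S, if_neg c1, if_neg c2]; omega

lemma S_inj {m n a a' b b' : ℕ} (hm : 3 ≤ m) (hn : 1 ≤ n)
    (ha : a < m) (ha' : a' < m) (hb : b ≤ n) (hb' : b' ≤ n)
    (h : S m n a b = S m n a' b') : a = a' ∧ b = b' := by
  have hKK : K n b = K n b' := by
    rcases Nat.lt_trichotomy (K n b) (K n b') with hc | hc | hc
    · exact absurd h (Nat.ne_of_lt (no_overlap hm hn ha ha' hb hb' hc))
    · exact hc
    · exact absurd h.symm (Nat.ne_of_lt (no_overlap hm hn ha' ha hb' hb hc))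
  have hbb : b = b' := K_inj hn hb hb' hKK
  subst hbb
  refine ⟨?_, rfl⟩
  by_cases c1 : b = 0 ∨ b = n
  · simp only [S, if_pos c1] at h
    exact gB_inj hm ha ha' (by omega)
  · simp only [S, if_neg c1] at h
    exact gI_inj hm ha ha' (by omega)

end PrismAux2

namespace PrismAux3
open PrismAux PrismAux2

lemma S_form0 {m n a : ℕ} (hn : 1 ≤ n) :
    hl m n 0 (mv m a) + hl m n 0 a + vl m n 0 a = S m n a 0 := by
  have e : m * (2 * a0 n + 2 * n) = m * a0 n + m * a0 n + m * (2 * (n - 0)) := by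
    have : n - 0 = n := rfl
    rw [this]; ring
  unfold hl vl S K gB sg al be
  split_ifs <;> omega

lemma S_formN {m n a : ℕ} (hn : 1 ≤ n) :
    hl m n n (mv m a) + hl m n n a + vl m n (n - 1) a = S m n a n := by
  have e : m * (2 * (1 - a0 n) + 2) = m * (1 - a0 n) + m * (1 - a0 n) + m * 2 := by ring
  have e2 : be n (n - 1) = 2 := by unfold be; omega
  unfold hl vl S K gB sg al
  rw [e2]
  split_ifs <;> omega

lemma S_formI {m n a b : ℕ} (hn : 1 ≤ n) (hb1 : 1 ≤ b) (hb2 : b < n) :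
    hl m n b (mv m a) + hl m n b a + vl m n (b - 1) a + vl m n b a = S m n a b := by
  have e2 : 2 * (n - (b - 1)) = 2 * (n - b) + 2 := by omega
  have e : m * (8 * (n - b) + 4) =
      (m * (2 * (n - b) + 1) + m * (2 * (n - b) + 1)) + m * (2 * (n - b) + 2)
        + m * (2 * (n - b)) := by ring
  unfold hl vl S K sg gI al be
  rw [e2]
  split_ifs <;> omega

end PrismAux3

namespace PrismAux4
open PrismAux PrismAux2 PrismAux3 SimpleGraph

lemma fin_sub_val {m : ℕ} (u v : Fin m) : (u - v).val = ((m - v.val) + u.val) % m := by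
  rw [Fin.sub_def]

lemma cyc_adj {m : ℕ} (hm : 3 ≤ m) (u v : Fin m) :
    (cycleGraph m).Adj u v ↔ v.val = pv m u.val ∨ u.val = pv m v.val := by
  have hu := u.isLt; have hv := v.isLt
  have key : ∀ x y : Fin m, ((m - y.val) + x.val) % m = 1 ↔
      (x.val = y.val + 1 ∨ (y.val = m - 1 ∧ x.val = 0)) := by
    intro x y
    have hx := x.isLt; have hy := y.isLt
    rcases le_or_gt y.val x.val with hc | hc
    · have e : (m - y.val) + x.val = (x.val - y.val) + m := by omega
      rw [e, Nat.add_mod_right, Nat.mod_eq_of_lt (by omega)]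
      omega
    · have e : (m - y.val) + x.val < m := by omega
      rw [Nat.mod_eq_of_lt e]
      omega
  rw [cycleGraph_adj', fin_sub_val, fin_sub_val, key, key]
  unfold pv
  split_ifs <;> omega

lemma pv_mv {m a : ℕ} (hm : 3 ≤ m) (ha : a < m) : pv m (mv m a) = a := by
  unfold pv mv; split_ifs <;> omega

def Hor (m n : ℕ) (u v : Fin m × Fin (n+1)) : ℕ :=
  if u.2.val = v.2.val ∧ (v.1.val = u.1.val + 1 ∨ (u.1.val = m - 1 ∧ v.1.val = 0)) then
    hl m n u.2.val u.1.val else 0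

def Ver (m n : ℕ) (u v : Fin m × Fin (n+1)) : ℕ :=
  if u.1.val = v.1.val ∧ v.2.val = u.2.val + 1 then vl m n u.2.val u.1.val else 0

def FF (m n : ℕ) (u v : Fin m × Fin (n+1)) : ℕ :=
  Hor m n u v + Hor m n v u + Ver m n u v + Ver m n v u

lemma FF_comm (m n : ℕ) (u v : Fin m × Fin (n+1)) : FF m n u v = FF m n v u := by
  unfold FF; omega

noncomputable def ff (m n : ℕ) : Sym2 (Fin m × Fin (n+1)) → ℕ :=
  Sym2.lift ⟨fun u v => FF m n u v, fun u v => FF_comm m n u v⟩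

lemma ff_mk {m n : ℕ} (u v : Fin m × Fin (n+1)) : ff m n s(u, v) = FF m n u v := by
  unfold ff; rw [Sym2.lift_mk]

lemma FF_hor {m n : ℕ} (hm : 3 ≤ m) (a c : Fin m) (b : Fin (n+1))
    (h : c.val = pv m a.val) : FF m n (a, b) (c, b) = hl m n b.val a.val := by
  have ha := a.isLt; have hc := c.isLt
  unfold pv at h
  simp only [FF, Hor, Ver, true_and]
  split_ifs at h ⊢ <;> omega

lemma FF_ver {m n : ℕ} (a : Fin m) (b d : Fin (n+1))
    (h : d.val = b.val + 1) : FF m n (a, b) (a, d) = vl m n b.val a.val := by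
  simp only [FF, Hor, Ver, true_and]
  split_ifs <;> omega

end PrismAux4

namespace PrismAux5
open PrismAux PrismAux2 PrismAux3 PrismAux4 SimpleGraph

variable {m n : ℕ}

lemma vsum0 (hm : 3 ≤ m) (hn : 1 ≤ n) (a : Fin m) (b : Fin (n+1)) (hb : b.val = 0) :
    vertexSum (cycleGraph m □ pathGraph (n+1)) (ff m n) (a, b) = S m n a.val b.val := by
  classical
  have ham : mv m a.val < m := mv_lt (by omega) a.isLt
  have hap : pv m a.val < m := pv_lt (by omega) a.isLt
  have ha := a.isLt
  set aM : Fin m := ⟨mv m a.val, ham⟩ with haM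
  set aP : Fin m := ⟨pv m a.val, hap⟩ with haP
  set bU : Fin (n+1) := ⟨b.val + 1, by omega⟩ with hbU
  unfold vertexSum
  rw [show (Finset.univ.filter (fun w => (cycleGraph m □ pathGraph (n+1)).Adj (a, b) w))
      = {(aM, b), (aP, b), (a, bU)} by
    ext ⟨c, d⟩
    have hc := c.isLt; have hd := d.isLt
    simp only [Finset.mem_filter, Finset.mem_univ, true_and, boxProd_adj,
      cyc_adj hm, pathGraph_adj, Finset.mem_insert, Finset.mem_singleton,
      Prod.mk.injEq, Fin.ext_iff, haM, haP, hbU]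
    unfold pv mv
    split_ifs <;> omega]
  rw [Finset.sum_insert (by
      simp only [Finset.mem_insert, Finset.mem_singleton, Prod.mk.injEq, Fin.ext_iff, haM, haP, hbU]
      unfold pv mv; split_ifs <;> omega),
    Finset.sum_insert (by
      simp only [Finset.mem_singleton, Prod.mk.injEq, Fin.ext_iff, haP, hbU]
      omega),
    Finset.sum_singleton]
  rw [ff_mk, ff_mk, ff_mk, FF_comm m n (a,b) (aM, b), FF_hor hm aM a b (by rw [haM]; exact (pv_mv hm ha).symm),
    FF_hor hm a aP b rfl, FF_ver a b bU rfl]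
  rw [hb]
  have h := S_form0 (m := m) (n := n) (a := a.val) hn
  simp only [haM, Fin.val_mk]
  omega

lemma vsumN (hm : 3 ≤ m) (hn : 1 ≤ n) (a : Fin m) (b : Fin (n+1)) (hb : b.val = n) :
    vertexSum (cycleGraph m □ pathGraph (n+1)) (ff m n) (a, b) = S m n a.val b.val := by
  classical
  have ham : mv m a.val < m := mv_lt (by omega) a.isLt
  have hap : pv m a.val < m := pv_lt (by omega) a.isLt
  have ha := a.isLt
  set aM : Fin m := ⟨mv m a.val, ham⟩ with haM
  set aP : Fin m := ⟨pv m a.val, hap⟩ with haP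
  set bD : Fin (n+1) := ⟨b.val - 1, by omega⟩ with hbD
  unfold vertexSum
  rw [show (Finset.univ.filter (fun w => (cycleGraph m □ pathGraph (n+1)).Adj (a, b) w))
      = {(aM, b), (aP, b), (a, bD)} by
    ext ⟨c, d⟩
    have hc := c.isLt; have hd := d.isLt
    simp only [Finset.mem_filter, Finset.mem_univ, true_and, boxProd_adj,
      cyc_adj hm, pathGraph_adj, Finset.mem_insert, Finset.mem_singleton,
      Prod.mk.injEq, Fin.ext_iff, haM, haP, hbD]
    unfold pv mv
    split_ifs <;> omega]
  rw [Finset.sum_insert (by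
      simp only [Finset.mem_insert, Finset.mem_singleton, Prod.mk.injEq, Fin.ext_iff, haM, haP, hbD]
      unfold pv mv; split_ifs <;> omega),
    Finset.sum_insert (by
      simp only [Finset.mem_singleton, Prod.mk.injEq, Fin.ext_iff, haP, hbD]
      omega),
    Finset.sum_singleton]
  rw [ff_mk, ff_mk, ff_mk, FF_comm m n (a,b) (aM, b), FF_hor hm aM a b (by rw [haM]; exact (pv_mv hm ha).symm),
    FF_hor hm a aP b rfl, FF_comm m n (a,b) (a, bD), FF_ver a bD b (by rw [hbD]; simp; omega)]
  rw [hb]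
  have h := S_formN (m := m) (n := n) (a := a.val) hn
  simp only [haM, hbD, Fin.val_mk, hb]
  omega

lemma vsumI (hm : 3 ≤ m) (hn : 1 ≤ n) (a : Fin m) (b : Fin (n+1)) (hb1 : 1 ≤ b.val)
    (hb2 : b.val < n) :
    vertexSum (cycleGraph m □ pathGraph (n+1)) (ff m n) (a, b) = S m n a.val b.val := by
  classical
  have ham : mv m a.val < m := mv_lt (by omega) a.isLt
  have hap : pv m a.val < m := pv_lt (by omega) a.isLt
  have ha := a.isLt
  set aM : Fin m := ⟨mv m a.val, ham⟩ with haM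
  set aP : Fin m := ⟨pv m a.val, hap⟩ with haP
  set bD : Fin (n+1) := ⟨b.val - 1, by omega⟩ with hbD
  set bU : Fin (n+1) := ⟨b.val + 1, by omega⟩ with hbU
  unfold vertexSum
  rw [show (Finset.univ.filter (fun w => (cycleGraph m □ pathGraph (n+1)).Adj (a, b) w))
      = {(aM, b), (aP, b), (a, bD), (a, bU)} by
    ext ⟨c, d⟩
    have hc := c.isLt; have hd := d.isLt
    simp only [Finset.mem_filter, Finset.mem_univ, true_and, boxProd_adj,
      cyc_adj hm, pathGraph_adj, Finset.mem_insert, Finset.mem_singleton,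
      Prod.mk.injEq, Fin.ext_iff, haM, haP, hbD, hbU]
    unfold pv mv
    split_ifs <;> omega]
  rw [Finset.sum_insert (by
      simp only [Finset.mem_insert, Finset.mem_singleton, Prod.mk.injEq, Fin.ext_iff, haM, haP, hbD, hbU]
      unfold pv mv; split_ifs <;> omega),
    Finset.sum_insert (by
      simp only [Finset.mem_insert, Finset.mem_singleton, Prod.mk.injEq, Fin.ext_iff, haP, hbD, hbU]
      omega),
    Finset.sum_insert (by
      simp only [Finset.mem_singleton, Prod.mk.injEq, Fin.ext_iff, hbD, hbU]
      omega),
    Finset.sum_singleton]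
  rw [ff_mk, ff_mk, ff_mk, ff_mk, FF_comm m n (a,b) (aM, b),
    FF_hor hm aM a b (by rw [haM]; exact (pv_mv hm ha).symm),
    FF_hor hm a aP b rfl, FF_comm m n (a,b) (a, bD), FF_ver a bD b (by rw [hbD]; simp; omega),
    FF_ver a b bU rfl]
  have h := S_formI (m := m) (n := n) (a := a.val) (b := b.val) hn hb1 hb2
  simp only [haM, hbD, Fin.val_mk]
  omega

end PrismAux5

namespace PrismAux6
open PrismAux PrismAux2 PrismAux3 PrismAux4 SimpleGraph

variable {m n : ℕ}

lemma hl_mem (hm : 3 ≤ m) (hn : 1 ≤ n) {j i : ℕ} (hj : j ≤ n) (hi : i < m) :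
    1 ≤ hl m n j i ∧ hl m n j i ≤ m * (2 * n + 1) := by
  have h1 := al_le hn hj
  have h2 := sg_lt (m := m) (n := n) (j := j) (i := i) (by omega) hi
  have h3 : m * al n j ≤ m * (2 * n) := Nat.mul_le_mul_left m h1
  have h4 : m * (2 * n + 1) = m * (2 * n) + m := by ring
  unfold hl; omega

lemma vl_mem (hm : 3 ≤ m) {j i : ℕ} (hj : j < n) (hi : i < m) :
    1 ≤ vl m n j i ∧ vl m n j i ≤ m * (2 * n + 1) := by
  have h1 := be_le hj
  have h2 := zz_lt (m := m) (i := i) (by omega) hi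
  have h3 : m * be n j ≤ m * (2 * n) := Nat.mul_le_mul_left m h1
  have h4 : m * (2 * n + 1) = m * (2 * n) + m := by ring
  unfold vl; omega

lemma edge_canon (hm : 3 ≤ m) {e : Sym2 (Fin m × Fin (n+1))}
    (he : e ∈ (cycleGraph m □ pathGraph (n+1)).edgeSet) :
    (∃ (a c : Fin m) (b : Fin (n+1)), c.val = pv m a.val ∧ e = s((a,b),(c,b)) ∧
        ff m n e = hl m n b.val a.val) ∨
    (∃ (a : Fin m) (b d : Fin (n+1)), d.val = b.val + 1 ∧ e = s((a,b),(a,d)) ∧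
        ff m n e = vl m n b.val a.val) := by
  induction e using Sym2.ind with
  | _ u v =>
    rw [SimpleGraph.mem_edgeSet] at he
    obtain ⟨u1, u2⟩ := u; obtain ⟨v1, v2⟩ := v
    rw [boxProd_adj] at he
    rcases he with ⟨hc, h2⟩ | ⟨hp, h2⟩
    · simp only at h2
      subst h2
      rw [cyc_adj hm] at hc
      rcases hc with h | h
      · exact Or.inl ⟨u1, v1, u2, h, rfl, by rw [ff_mk]; exact FF_hor hm u1 v1 u2 h⟩
      · refine Or.inl ⟨v1, u1, u2, h, Sym2.eq_swap, ?_⟩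
        rw [ff_mk, FF_comm]
        exact FF_hor hm v1 u1 u2 h
    · simp only at h2
      subst h2
      rw [pathGraph_adj] at hp
      rcases hp with h | h
      · exact Or.inr ⟨u1, u2, v2, h.symm, rfl, by rw [ff_mk]; exact FF_ver u1 u2 v2 h.symm⟩
      · refine Or.inr ⟨u1, v2, u2, h.symm, Sym2.eq_swap, ?_⟩
        rw [ff_mk, FF_comm]
        exact FF_ver u1 v2 u2 h.symm

lemma ff_injOn (hm : 3 ≤ m) (hn : 1 ≤ n) :
    Set.InjOn (ff m n) (cycleGraph m □ pathGraph (n+1)).edgeSet := by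
  intro e he e' he' heq
  have hm1 : (1:ℕ) ≤ m := by omega
  rcases edge_canon hm he with ⟨a,c,b,h1,rfl,hv⟩ | ⟨a,b,d,h1,rfl,hv⟩ <;>
    rcases edge_canon hm he' with ⟨a',c',b',h1',rfl,hv'⟩ | ⟨a',b',d',h1',rfl,hv'⟩
  · rw [hv, hv'] at heq
    unfold hl at heq
    have heq2 : m * al n b.val + sg m n b.val a.val = m * al n b'.val + sg m n b'.val a'.val := by
      omega
    obtain ⟨hal, hsg⟩ := blocks (sg_lt hm1 a.isLt) (sg_lt hm1 a'.isLt) heq2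
    have hb : b.val = b'.val := al_inj hn (by omega) (by omega) hal
    rw [hb] at hsg
    have haa : a.val = a'.val := sg_inj hm1 a.isLt a'.isLt hsg
    obtain rfl : a = a' := Fin.ext haa
    obtain rfl : b = b' := Fin.ext hb
    obtain rfl : c = c' := Fin.ext (by rw [h1, h1'])
    rfl
  · rw [hv, hv'] at heq
    unfold hl vl at heq
    have heq2 : m * al n b.val + sg m n b.val a.val = m * be n b'.val + zz m a'.val := by
      omega
    obtain ⟨hub, -⟩ := blocks (sg_lt hm1 a.isLt) (zz_lt hm1 a'.isLt) heq2
    have hd' := d'.isLt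
    exact absurd hub (al_ne_be hn (by omega) (by omega))
  · rw [hv, hv'] at heq
    unfold hl vl at heq
    have heq2 : m * be n b.val + zz m a.val = m * al n b'.val + sg m n b'.val a'.val := by
      omega
    obtain ⟨hub, -⟩ := blocks (zz_lt hm1 a.isLt) (sg_lt hm1 a'.isLt) heq2
    have hd := d.isLt
    exact absurd hub.symm (al_ne_be hn (by omega) (by omega))
  · rw [hv, hv'] at heq
    unfold vl at heq
    have heq2 : m * be n b.val + zz m a.val = m * be n b'.val + zz m a'.val := by
      omega
    obtain ⟨hbe, hzz⟩ := blocks (zz_lt hm1 a.isLt) (zz_lt hm1 a'.isLt) heq2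
    have hd := d.isLt; have hd' := d'.isLt
    have hb : b.val = b'.val := be_inj (by omega) (by omega) hbe
    have haa : a.val = a'.val := zz_inj a.isLt a'.isLt hzz
    obtain rfl : a = a' := Fin.ext haa
    obtain rfl : b = b' := Fin.ext hb
    obtain rfl : d = d' := Fin.ext (by omega)
    rfl

lemma exists_h (hm : 3 ≤ m) {j i : ℕ} (hj : j ≤ n) (hi : i < m) :
    ∃ e ∈ (cycleGraph m □ pathGraph (n+1)).edgeSet, ff m n e = hl m n j i := by
  have hip : pv m i < m := pv_lt (by omega) hi
  refine ⟨s(((⟨i, hi⟩ : Fin m), (⟨j, by omega⟩ : Fin (n+1))), ((⟨pv m i, hip⟩ : Fin m), (⟨j, by omega⟩ : Fin (n+1)))), ?_, ?_⟩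
  · rw [SimpleGraph.mem_edgeSet, boxProd_adj]
    exact Or.inl ⟨(cyc_adj hm _ _).mpr (Or.inl rfl), rfl⟩
  · rw [ff_mk]
    exact FF_hor hm _ _ _ rfl

lemma exists_v (hm : 3 ≤ m) {j i : ℕ} (hj : j < n) (hi : i < m) :
    ∃ e ∈ (cycleGraph m □ pathGraph (n+1)).edgeSet, ff m n e = vl m n j i := by
  refine ⟨s(((⟨i, hi⟩ : Fin m), (⟨j, by omega⟩ : Fin (n+1))), ((⟨i, hi⟩ : Fin m), (⟨j+1, by omega⟩ : Fin (n+1)))), ?_, ?_⟩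
  · rw [SimpleGraph.mem_edgeSet, boxProd_adj]
    exact Or.inr ⟨pathGraph_adj.mpr (Or.inl rfl), rfl⟩
  · rw [ff_mk]
    exact FF_ver _ _ _ rfl

lemma ff_mapsTo (hm : 3 ≤ m) (hn : 1 ≤ n) :
    Set.MapsTo (ff m n) (cycleGraph m □ pathGraph (n+1)).edgeSet
      (Set.Icc 1 (m * (2 * n + 1))) := by
  intro e he
  rcases edge_canon hm he with ⟨a,c,b,h1,rfl,hv⟩ | ⟨a,b,d,h1,rfl,hv⟩
  · rw [hv]
    have := hl_mem hm hn (j := b.val) (i := a.val) (by have := b.isLt; omega) a.isLt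
    exact Set.mem_Icc.mpr this
  · rw [hv]
    have hd := d.isLt
    have := vl_mem (n := n) hm (j := b.val) (i := a.val) (by omega) a.isLt
    exact Set.mem_Icc.mpr this

lemma ff_surjOn (hm : 3 ≤ m) (hn : 1 ≤ n) :
    Set.SurjOn (ff m n) (cycleGraph m □ pathGraph (n+1)).edgeSet
      (Set.Icc 1 (m * (2 * n + 1))) := by
  intro t ht
  rw [Set.mem_Icc] at ht
  obtain ⟨ht1, ht2⟩ := ht
  obtain ⟨u, r, hdm, hrm⟩ : ∃ u r, m * u + r = t - 1 ∧ r < m :=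
    ⟨(t - 1) / m, (t - 1) % m, Nat.div_add_mod (t - 1) m, Nat.mod_lt _ (by omega)⟩
  have hu : u ≤ 2 * n := by
    by_contra hc
    have h8 : m * (2 * n + 1) ≤ m * u := Nat.mul_le_mul_left m (by omega)
    omega
  by_cases hc1 : u % 2 = 0 ∧ 2 ≤ u
  · -- vertical edge
    set j := n - u / 2 with hj_def
    have hj : j < n := by omega
    have hbe : be n j = u := by unfold be; omega
    obtain ⟨e, he, hfe⟩ := exists_v (n := n) hm hj (zinv_lt hrm)
    refine ⟨e, he, ?_⟩
    rw [hfe]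
    unfold vl
    rw [hbe, zz_zinv hrm]
    omega
  · by_cases hc2 : u % 2 = 1 ∧ 3 ≤ u
    · -- interior horizontal edge
      set j := n - (u - 1) / 2 with hj_def
      have hj1 : 1 ≤ j := by omega
      have hj2 : j ≤ n - 1 := by omega
      have hal : al n j = u := by unfold al; split_ifs <;> omega
      have hsg : sg m n j (zinv m r) = r := by
        unfold sg
        rw [if_neg (by omega), zz_zinv hrm]
      obtain ⟨e, he, hfe⟩ := exists_h (n := n) hm (j := j) (by omega) (zinv_lt hrm)
      refine ⟨e, he, ?_⟩
      rw [hfe]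
      unfold hl
      rw [hal, hsg]
      omega
    · -- boundary horizontal edge, u ∈ {0, 1}
      have hu1 : u ≤ 1 := by omega
      have hra : m - 1 - r < m := by omega
      have ha0 : a0 n ≤ 1 := by unfold a0; split_ifs <;> omega
      by_cases hb0 : u = a0 n
      · have hal : al n 0 = u := by unfold al; rw [if_pos rfl]; omega
        have hsg : sg m n 0 (zinv m (m - 1 - r)) = r := by
          unfold sg
          rw [if_pos (Or.inl rfl), zz_zinv hra]
          omega
        obtain ⟨e, he, hfe⟩ := exists_h (n := n) hm (j := 0) (by omega) (zinv_lt hra)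
        refine ⟨e, he, ?_⟩
        rw [hfe]
        unfold hl
        rw [hal, hsg]
        omega
      · have hal : al n n = u := by
          unfold a0 at hb0 ha0
          unfold al a0
          rw [if_neg (by omega), if_pos rfl]
          split_ifs at hb0 ⊢ <;> omega
        have hsg : sg m n n (zinv m (m - 1 - r)) = r := by
          unfold sg
          rw [if_pos (Or.inr rfl), zz_zinv hra]
          omega
        obtain ⟨e, he, hfe⟩ := exists_h (n := n) hm (j := n) (by omega) (zinv_lt hra)
        refine ⟨e, he, ?_⟩
        rw [hfe]
        unfold hl
        rw [hal, hsg]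
        omega

end PrismAux6

open PrismAux PrismAux2 PrismAux3 PrismAux4 PrismAux5 PrismAux6 in
/-- Every prism graph `C[m] □ P[n+1]` with `m ≥ 3`, `n ≥ 1` is antimagic. -/
theorem prism_isAntimagic (m n : ℕ) (hm : 3 ≤ m) (hn : 1 ≤ n) :
    IsAntimagic (cycleGraph m □ pathGraph (n + 1)) := by
  classical
  refine ⟨ff m n, ?_, ?_⟩
  · have hbij : Set.BijOn (ff m n) (cycleGraph m □ pathGraph (n+1)).edgeSet
        (Set.Icc 1 (m * (2 * n + 1))) :=
      ⟨ff_mapsTo hm hn, ff_injOn hm hn, ff_surjOn hm hn⟩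
    have hcard : (cycleGraph m □ pathGraph (n+1)).edgeSet.ncard = m * (2 * n + 1) := by
      have h1 := Set.ncard_image_of_injOn hbij.injOn
      rw [hbij.image_eq] at h1
      rw [← h1, ← Finset.coe_Icc, Set.ncard_coe_finset, Nat.card_Icc]
      omega
    rw [hcard]
    exact hbij
  · intro x y hxy
    obtain ⟨a, b⟩ := x; obtain ⟨a', b'⟩ := y
    have hS : ∀ (a : Fin m) (b : Fin (n+1)),
        vertexSum (cycleGraph m □ pathGraph (n+1)) (ff m n) (a, b) = S m n a.val b.val := by
      intro a b
      have hb := b.isLt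
      rcases eq_or_ne b.val 0 with h0 | h0
      · exact vsum0 hm hn a b h0
      · rcases eq_or_ne b.val n with hN | hN
        · exact vsumN hm hn a b hN
        · exact vsumI hm hn a b (by omega) (by omega)
    rw [hS, hS] at hxy
    obtain ⟨h1, h2⟩ := S_inj hm hn a.isLt a'.isLt (by have := b.isLt; omega)
      (by have := b'.isLt; omega) hxy
    exact Prod.ext (Fin.ext h1) (Fin.ext h2)
end

section
/- The graph P_1[2] × P_2[n+1] (the Cartesian product of an edge with a path on n+1 vertices, i.e., the ladder graph) is antimagic for every n ≥ 1. -/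
open Finset SimpleGraph

namespace LadderAux


/-- rung label at column `k` -/
def cval (n k : ℕ) : ℕ :=
  if n % 3 = 2 ∧ k = n - 1 then 3*n+1
  else if n % 3 = 2 ∧ k = n then 3*n-2
  else 3*k+1

/-- label of the edge between `v` and `w` (junk `0` if not adjacent) -/
def lab (n : ℕ) (v w : Fin 2 × Fin (n+1)) : ℕ :=
  if (v.2 : ℕ) = (w.2 : ℕ) then
    (if (v.1 : ℕ) = (w.1 : ℕ) then 0 else cval n (v.2 : ℕ))
  else if (v.1 : ℕ) = (w.1 : ℕ) then
    (if (v.2 : ℕ) + 1 = (w.2 : ℕ) then 3*(v.2:ℕ)+2+(v.1:ℕ)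
     else if (w.2 : ℕ) + 1 = (v.2 : ℕ) then 3*(w.2:ℕ)+2+(v.1:ℕ)
     else 0)
  else 0

lemma lab_symm (n : ℕ) : ∀ v w, lab n v w = lab n w v := by
  intro v w
  unfold lab
  split_ifs <;> first | omega | (congr 1 <;> omega)





noncomputable def elab' (n : ℕ) : Sym2 (Fin 2 × Fin (n+1)) → ℕ :=
  Sym2.lift ⟨lab n, lab_symm n⟩

lemma adj_iff (n : ℕ) (v w : Fin 2 × Fin (n+1)) :
    (pathGraph 2 □ pathGraph (n+1)).Adj v w ↔
      (((v.1:ℕ) ≠ (w.1:ℕ) ∧ (v.2:ℕ) = (w.2:ℕ)) ∨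
       ((v.1:ℕ) = (w.1:ℕ) ∧ ((v.2:ℕ)+1 = (w.2:ℕ) ∨ (w.2:ℕ)+1 = (v.2:ℕ)))) := by
  have h1 := v.1.is_lt; have h2 := w.1.is_lt
  simp only [boxProd_adj, pathGraph_adj, Prod.ext_iff, Fin.ext_iff]
  omega

lemma elab'_mk (n : ℕ) (v w : Fin 2 × Fin (n+1)) : elab' n s(v,w) = lab n v w := rfl

set_option maxHeartbeats 2000000 in
lemma bij (n : ℕ) (hn : 1 ≤ n) :
    Set.BijOn (elab' n) (pathGraph 2 □ pathGraph (n+1)).edgeSet (Set.Icc 1 (3*n+1)) := by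
  refine ⟨?_, ?_, ?_⟩
  · intro e he
    induction e using Sym2.ind with
    | _ v w =>
      rw [SimpleGraph.mem_edgeSet, adj_iff] at he
      rw [elab'_mk, Set.mem_Icc]
      have := v.2.is_lt; have := w.2.is_lt
      unfold lab cval
      split_ifs <;> omega
  · intro e he e' he' heq
    induction e using Sym2.ind with
    | _ v w =>
      induction e' using Sym2.ind with
      | _ v' w' =>
        obtain ⟨a, b⟩ := v; obtain ⟨c, d⟩ := w
        obtain ⟨a', b'⟩ := v'; obtain ⟨c', d'⟩ := w'
        rw [SimpleGraph.mem_edgeSet, adj_iff] at he he'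
        rw [elab'_mk, elab'_mk] at heq
        dsimp only at he he' heq
        rw [Sym2.eq_iff]
        simp only [Prod.ext_iff, Fin.ext_iff]
        have := a.is_lt; have := c.is_lt; have := a'.is_lt; have := c'.is_lt
        have := b.is_lt; have := d.is_lt; have := b'.is_lt; have := d'.is_lt
        simp only [lab, cval] at heq
        split_ifs at heq <;> omega
  · intro m hm
    obtain ⟨hm1, hm2⟩ := Set.mem_Icc.mp hm
    have h3' : m % 3 = 0 ∨ m % 3 = 1 ∨ m % 3 = 2 := by omega
    rcases h3' with h3 | h3 | h3
    · -- top rail, k = (m-3)/3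
      refine ⟨s(((⟨1, by omega⟩ : Fin 2), (⟨(m-3)/3, by omega⟩ : Fin (n+1))),
               ((⟨1, by omega⟩ : Fin 2), (⟨(m-3)/3+1, by omega⟩ : Fin (n+1)))), ?_, ?_⟩
      · rw [SimpleGraph.mem_edgeSet, adj_iff]; dsimp only; omega
      · rw [elab'_mk]; dsimp only [lab, cval]; split_ifs <;> first | exact absurd trivial ‹¬True› | exact ‹False›.elim | omega
    · -- rung
      by_cases hc : n % 3 = 2
      · rcases eq_or_ne m (3*n+1) with hm3 | hm3
        · refine ⟨s(((⟨0, by omega⟩ : Fin 2), (⟨n-1, by omega⟩ : Fin (n+1))),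
                   ((⟨1, by omega⟩ : Fin 2), (⟨n-1, by omega⟩ : Fin (n+1)))), ?_, ?_⟩
          · rw [SimpleGraph.mem_edgeSet, adj_iff]; dsimp only; omega
          · rw [elab'_mk]; dsimp only [lab, cval]; split_ifs <;> first | exact absurd trivial ‹¬True› | exact ‹False›.elim | omega
        · rcases eq_or_ne m (3*n-2) with hm4 | hm4
          · refine ⟨s(((⟨0, by omega⟩ : Fin 2), (⟨n, by omega⟩ : Fin (n+1))),
                     ((⟨1, by omega⟩ : Fin 2), (⟨n, by omega⟩ : Fin (n+1)))), ?_, ?_⟩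
            · rw [SimpleGraph.mem_edgeSet, adj_iff]; dsimp only; omega
            · rw [elab'_mk]; dsimp only [lab, cval]; split_ifs <;> first | exact absurd trivial ‹¬True› | exact ‹False›.elim | omega
          · refine ⟨s(((⟨0, by omega⟩ : Fin 2), (⟨(m-1)/3, by omega⟩ : Fin (n+1))),
                     ((⟨1, by omega⟩ : Fin 2), (⟨(m-1)/3, by omega⟩ : Fin (n+1)))), ?_, ?_⟩
            · rw [SimpleGraph.mem_edgeSet, adj_iff]; dsimp only; omega
            · rw [elab'_mk]; dsimp only [lab, cval]; split_ifs <;> first | exact absurd trivial ‹¬True› | exact ‹False›.elim | omega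
      · refine ⟨s(((⟨0, by omega⟩ : Fin 2), (⟨(m-1)/3, by omega⟩ : Fin (n+1))),
                 ((⟨1, by omega⟩ : Fin 2), (⟨(m-1)/3, by omega⟩ : Fin (n+1)))), ?_, ?_⟩
        · rw [SimpleGraph.mem_edgeSet, adj_iff]; dsimp only; omega
        · rw [elab'_mk]; dsimp only [lab, cval]; split_ifs <;> first | exact absurd trivial ‹¬True› | exact ‹False›.elim | omega
    · -- bottom rail, k = (m-2)/3
      refine ⟨s(((⟨0, by omega⟩ : Fin 2), (⟨(m-2)/3, by omega⟩ : Fin (n+1))),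
               ((⟨0, by omega⟩ : Fin 2), (⟨(m-2)/3+1, by omega⟩ : Fin (n+1)))), ?_, ?_⟩
      · rw [SimpleGraph.mem_edgeSet, adj_iff]; dsimp only; omega
      · rw [elab'_mk]; dsimp only [lab, cval]; split_ifs <;> first | exact absurd trivial ‹¬True› | exact ‹False›.elim | omega


def P (n i jv : ℕ) : ℕ :=
  if jv = 0 then 3 + i
  else if jv = n then (if n % 3 = 2 then 6*n-3+i else 6*n+i)
  else cval n jv + 6*jv + 1 + 2*i

lemma P_inj (n : ℕ) (hn : 1 ≤ n) {i i' jv jv' : ℕ} (hi : i < 2) (hi' : i' < 2)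
    (hj : jv ≤ n) (hj' : jv' ≤ n) (h : P n i jv = P n i' jv') : i = i' ∧ jv = jv' := by
  have hi2 : i = 0 ∨ i = 1 := by omega
  have hi2' : i' = 0 ∨ i' = 1 := by omega
  rcases hi2 with rfl | rfl <;> rcases hi2' with rfl | rfl <;>
    (unfold P cval at h; split_ifs at h <;> omega)

def flip2 (i : Fin 2) : Fin 2 := ⟨1 - (i : ℕ), by omega⟩

set_option maxHeartbeats 1600000 in
lemma vsum (n : ℕ) (hn : 1 ≤ n) (v : Fin 2 × Fin (n+1)) :
    vertexSum (pathGraph 2 □ pathGraph (n+1)) (elab' n) v = P n (v.1 : ℕ) (v.2 : ℕ) := by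
  classical
  obtain ⟨i, j⟩ := v
  have hi := i.is_lt
  have hj := j.is_lt
  rcases eq_or_ne (j : ℕ) 0 with hj0 | hj0
  · have hfil : (Finset.univ.filter (fun w => (pathGraph 2 □ pathGraph (n+1)).Adj (i, j) w)) =
        {(flip2 i, j), (i, (⟨1, by omega⟩ : Fin (n+1)))} := by
      ext ⟨w1, w2⟩
      have := w1.is_lt; have := w2.is_lt
      simp only [mem_filter, mem_univ, true_and, adj_iff, mem_insert, mem_singleton,
        Prod.mk.injEq, Fin.ext_iff, flip2]
      omega
    rw [vertexSum]
    rw [hfil]  -- instances should match by classical/subsingleton? 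
    rw [Finset.sum_insert (by simp only [mem_singleton, Prod.mk.injEq, Fin.ext_iff, flip2]; omega),
      Finset.sum_singleton, elab'_mk, elab'_mk]
    dsimp only [lab, cval, P, flip2]
    split_ifs <;> first | exact absurd trivial ‹¬True› | exact ‹False›.elim | omega
  · rcases eq_or_ne (j : ℕ) n with hjn | hjn
    · have hfil : (Finset.univ.filter (fun w => (pathGraph 2 □ pathGraph (n+1)).Adj (i, j) w)) =
          {(flip2 i, j), (i, (⟨n-1, by omega⟩ : Fin (n+1)))} := by
        ext ⟨w1, w2⟩
        have := w1.is_lt; have := w2.is_lt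
        simp only [mem_filter, mem_univ, true_and, adj_iff, mem_insert, mem_singleton,
          Prod.mk.injEq, Fin.ext_iff, flip2]
        omega
      rw [vertexSum, hfil]
      rw [Finset.sum_insert (by simp only [mem_singleton, Prod.mk.injEq, Fin.ext_iff, flip2]; omega),
        Finset.sum_singleton, elab'_mk, elab'_mk]
      dsimp only [lab, cval, P, flip2]
      split_ifs <;> first | exact absurd trivial ‹¬True› | exact ‹False›.elim | omega
    · have hfil : (Finset.univ.filter (fun w => (pathGraph 2 □ pathGraph (n+1)).Adj (i, j) w)) =
          {(flip2 i, j), (i, (⟨(j:ℕ)-1, by omega⟩ : Fin (n+1))), (i, (⟨(j:ℕ)+1, by omega⟩ : Fin (n+1)))} := by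
        ext ⟨w1, w2⟩
        have := w1.is_lt; have := w2.is_lt
        simp only [mem_filter, mem_univ, true_and, adj_iff, mem_insert, mem_singleton,
          Prod.mk.injEq, Fin.ext_iff, flip2]
        omega
      rw [vertexSum, hfil]
      rw [Finset.sum_insert (by simp only [mem_insert, mem_singleton, Prod.mk.injEq, Fin.ext_iff, flip2]; omega),
        Finset.sum_insert (by simp only [mem_singleton, Prod.mk.injEq, Fin.ext_iff]; omega),
        Finset.sum_singleton, elab'_mk, elab'_mk, elab'_mk]
      dsimp only [lab, cval, P, flip2]
      split_ifs <;> first | exact absurd trivial ‹¬True› | exact ‹False›.elim | omega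

end LadderAux

/-- The ladder graph `P[2] □ P[n+1]` is antimagic for every `n ≥ 1`. -/
theorem ladder_isAntimagic (n : ℕ) (hn : 1 ≤ n) :
    IsAntimagic (pathGraph 2 □ pathGraph (n + 1)) := by
  have hb := LadderAux.bij n hn
  have hcard : (pathGraph 2 □ pathGraph (n+1)).edgeSet.ncard = 3*n+1 := by
    have h1 := hb.image_eq
    have h2 := Set.ncard_image_of_injOn hb.injOn
    rw [h1] at h2
    rw [← h2, ← Finset.coe_Icc, Set.ncard_coe_finset, Nat.card_Icc]
    omega
  refine ⟨LadderAux.elab' n, ?_, ?_⟩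
  · rw [hcard]; exact hb
  · intro v v' h
    rw [LadderAux.vsum n hn v, LadderAux.vsum n hn v'] at h
    have h2 := LadderAux.P_inj n hn v.1.is_lt v'.1.is_lt
        (Nat.lt_succ_iff.mp v.2.is_lt) (Nat.lt_succ_iff.mp v'.2.is_lt) h
    exact Prod.ext_iff.mpr ⟨Fin.ext h2.1, Fin.ext h2.2⟩
end

section
/- The graph C[m] × P[2] (the circular prism over an m-cycle, m ≥ 3) is antimagic: there exists a bijection from its 3m edges to {1,...,3m} with pairwise distinct vertex sums. -/
open Finset SimpleGraph

section Aux
variable {m : ℕ} [NeZero m]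

/-- Auxiliary label function on ordered pairs of vertices of the prism. -/
def gfun (m : ℕ) [NeZero m] (u v : Fin m × Fin 2) : ℕ :=
  if u.1 = v.1 then 2 * m - u.1.val
  else (if u.2 = 0 ∧ v.2 = 0 then 1 else 2 * m + 1) +
    (if v.1 = u.1 + 1 then u.1.val else if u.1 = v.1 + 1 then v.1.val else 0)

lemma fin_one_val (hm : 3 ≤ m) : ((1 : Fin m) : ℕ) = 1 := by
  rw [Fin.val_one']; exact Nat.mod_eq_of_lt (by omega)

lemma fin_succ_val (hm : 3 ≤ m) (i : Fin m) :
    (i + 1).val = if i.val + 1 = m then 0 else i.val + 1 := by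
  rw [Fin.val_add, fin_one_val hm]
  have := i.isLt
  by_cases h : i.val + 1 = m
  · rw [if_pos h, h, Nat.mod_self]
  · rw [if_neg h, Nat.mod_eq_of_lt (by omega)]

lemma fin_pred_val (hm : 3 ≤ m) (i : Fin m) :
    (i - 1).val = if i.val = 0 then m - 1 else i.val - 1 := by
  have := i.isLt
  simp only [Fin.sub_def, fin_one_val hm]
  by_cases h : i.val = 0
  · rw [if_pos h, h, Nat.add_zero, Nat.mod_eq_of_lt (by omega)]
  · rw [if_neg h]
    have h2 : m - 1 + i.val = (i.val - 1) + m := by omega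
    rw [h2, Nat.add_mod_right, Nat.mod_eq_of_lt (by omega)]

lemma fin_succ_ne (hm : 3 ≤ m) (i : Fin m) : i + 1 ≠ i := by
  intro h
  have h2 := congrArg Fin.val h
  rw [fin_succ_val hm] at h2
  have := i.isLt
  split_ifs at h2 <;> omega

lemma fin_pred_ne (hm : 3 ≤ m) (i : Fin m) : i - 1 ≠ i := by
  intro h
  have h2 := congrArg Fin.val h
  rw [fin_pred_val hm] at h2
  have := i.isLt
  split_ifs at h2 <;> omega

lemma fin_succ_ne_pred (hm : 3 ≤ m) (i : Fin m) : i + 1 ≠ i - 1 := by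
  intro h
  have h2 := congrArg Fin.val h
  rw [fin_succ_val hm, fin_pred_val hm] at h2
  have := i.isLt
  split_ifs at h2 <;> omega

lemma fin_pred_inj (hm : 3 ≤ m) {i j : Fin m} (h : (i - 1).val = (j - 1).val) : i = j := by
  have h2 : i - 1 = j - 1 := Fin.ext h
  have := congrArg (· + (1 : Fin m)) h2
  simpa [sub_add_cancel] using this

lemma gfun_symm (hm : 3 ≤ m) : ∀ u v, gfun m u v = gfun m v u := by
  rintro ⟨i, a⟩ ⟨j, b⟩
  unfold gfun
  dsimp only
  by_cases hij : i = j
  · rw [if_pos hij, if_pos hij.symm, hij]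
  · rw [if_neg hij, if_neg (Ne.symm hij)]
    have hbase : (if a = 0 ∧ b = 0 then 1 else 2 * m + 1)
        = (if b = 0 ∧ a = 0 then 1 else 2 * m + 1) := by
      by_cases h : a = 0 ∧ b = 0
      · rw [if_pos h, if_pos ⟨h.2, h.1⟩]
      · rw [if_neg h, if_neg (fun h' => h ⟨h'.2, h'.1⟩)]
    rw [hbase]
    congr 1
    have hexcl : ¬(j = i + 1 ∧ i = j + 1) := by
      rintro ⟨h1, h2⟩
      rw [h2] at h1
      refine fin_succ_ne_pred hm (j + 1) ?_
      rw [← h1, add_sub_cancel_right]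
    by_cases h1 : j = i + 1
    · rw [if_pos h1, if_neg (fun h2 => hexcl ⟨h1, h2⟩), if_pos h1]
    · rw [if_neg h1]
      by_cases h2 : i = j + 1
      · rw [if_pos h2, if_pos h2]
      · rw [if_neg h2, if_neg h2, if_neg h1]

lemma cyc_adj (hm : 3 ≤ m) {u v : Fin m} :
    (cycleGraph m).Adj u v ↔ u = v + 1 ∨ v = u + 1 := by
  rw [cycleGraph_adj']
  have key : ∀ x y : Fin m, (x - y).val = 1 ↔ x = y + 1 := by
    intro x y
    rw [show (1 : ℕ) = ((1 : Fin m) : ℕ) from (fin_one_val hm).symm, ← Fin.ext_iff,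
      sub_eq_iff_eq_add, add_comm 1 y]
  rw [key, key]

lemma prism_adj (hm : 3 ≤ m) {i j : Fin m} {a b : Fin 2} :
    (cycleGraph m □ pathGraph 2).Adj (i, a) (j, b) ↔
      ((i = j + 1 ∨ j = i + 1) ∧ a = b) ∨ (i = j ∧ a ≠ b) := by
  rw [boxProd_adj, pathGraph_two_eq_top]
  simp only [cyc_adj hm, top_adj]
  tauto

lemma ev_succ (hm : 3 ≤ m) (hs : ∀ u v, gfun m u v = gfun m v u) (i : Fin m) (a : Fin 2) :
    Sym2.lift ⟨gfun m, hs⟩ s((i, a), (i + 1, a)) =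
      (if a = 0 then 1 else 2 * m + 1) + i.val := by
  rw [Sym2.lift_mk]
  unfold gfun
  dsimp only
  rw [if_neg (Ne.symm (fin_succ_ne hm i)), if_pos rfl]
  simp only [and_self]

lemma ev_pred (hm : 3 ≤ m) (hs : ∀ u v, gfun m u v = gfun m v u) (i : Fin m) (a : Fin 2) :
    Sym2.lift ⟨gfun m, hs⟩ s((i, a), (i - 1, a)) =
      (if a = 0 then 1 else 2 * m + 1) + (i - 1).val := by
  rw [Sym2.lift_mk]
  unfold gfun
  dsimp only
  rw [if_neg (Ne.symm (fin_pred_ne hm i)),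
    if_neg (show ¬(i - 1 = i + 1) from fun h => fin_succ_ne_pred hm i h.symm),
    if_pos (show i = i - 1 + 1 from (sub_add_cancel i 1).symm)]
  simp only [and_self]

lemma ev_diag (hs : ∀ u v, gfun m u v = gfun m v u) (i : Fin m) (a b : Fin 2) :
    Sym2.lift ⟨gfun m, hs⟩ s((i, a), (i, b)) = 2 * m - i.val := by
  rw [Sym2.lift_mk]
  unfold gfun
  dsimp only
  rw [if_pos rfl]

lemma edge_class (hm : 3 ≤ m) {e : Sym2 (Fin m × Fin 2)} :
    e ∈ (cycleGraph m □ pathGraph 2).edgeSet ↔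
      ∃ i : Fin m, e = s((i, 0), (i + 1, 0)) ∨ e = s((i, 1), (i + 1, 1)) ∨
        e = s((i, 0), (i, 1)) := by
  induction e with
  | _ u v =>
    obtain ⟨i, a⟩ := u
    obtain ⟨j, b⟩ := v
    rw [mem_edgeSet]
    constructor
    · intro hadj
      rw [prism_adj hm] at hadj
      rcases hadj with ⟨h | h, rfl⟩ | ⟨rfl, hne⟩
      · refine ⟨j, ?_⟩
        subst h
        fin_cases a
        · exact Or.inl Sym2.eq_swap
        · exact Or.inr (Or.inl Sym2.eq_swap)
      · refine ⟨i, ?_⟩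
        subst h
        fin_cases a
        · exact Or.inl rfl
        · exact Or.inr (Or.inl rfl)
      · refine ⟨i, Or.inr (Or.inr ?_)⟩
        fin_cases a <;> fin_cases b
        · exact absurd rfl hne
        · rfl
        · exact Sym2.eq_swap
        · exact absurd rfl hne
    · rintro ⟨k, h | h | h⟩ <;> rw [prism_adj hm] <;> rw [Sym2.eq_iff] at h <;>
        simp only [Prod.mk.injEq] at h <;>
        rcases h with ⟨⟨rfl, rfl⟩, ⟨rfl, rfl⟩⟩ | ⟨⟨rfl, rfl⟩, ⟨rfl, rfl⟩⟩
      · exact Or.inl ⟨Or.inr rfl, rfl⟩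
      · exact Or.inl ⟨Or.inl rfl, rfl⟩
      · exact Or.inl ⟨Or.inr rfl, rfl⟩
      · exact Or.inl ⟨Or.inl rfl, rfl⟩
      · exact Or.inr ⟨rfl, by decide⟩
      · exact Or.inr ⟨rfl, by decide⟩

lemma vertexSum_eval (hm : 3 ≤ m) (f : Sym2 (Fin m × Fin 2) → ℕ) (i : Fin m) (a : Fin 2) :
    vertexSum (cycleGraph m □ pathGraph 2) f (i, a) =
      f s((i, a), (i + 1, a)) + f s((i, a), (i - 1, a)) + f s((i, a), (i, a + 1)) := by
  classical
  have hne1 : ((i + 1, a) : Fin m × Fin 2) ≠ (i - 1, a) := by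
    intro h; exact fin_succ_ne_pred hm i (congrArg Prod.fst h)
  have hne2 : ((i + 1, a) : Fin m × Fin 2) ≠ (i, a + 1) := by
    intro h
    have := congrArg Prod.snd h
    simp only at this
    revert this; fin_cases a <;> decide
  have hne3 : ((i - 1, a) : Fin m × Fin 2) ≠ (i, a + 1) := by
    intro h
    have := congrArg Prod.snd h
    simp only at this
    revert this; fin_cases a <;> decide
  have hfil : (Finset.univ.filter (fun w => (cycleGraph m □ pathGraph 2).Adj (i, a) w)) =
      ({(i + 1, a), (i - 1, a), (i, a + 1)} : Finset (Fin m × Fin 2)) := by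
    ext ⟨j, b⟩
    simp only [Finset.mem_filter, Finset.mem_univ, true_and, Finset.mem_insert,
      Finset.mem_singleton, Prod.mk.injEq, prism_adj hm]
    constructor
    · rintro (⟨h | h, rfl⟩ | ⟨rfl, hne⟩)
      · exact Or.inr (Or.inl ⟨by rw [h, add_sub_cancel_right], rfl⟩)
      · exact Or.inl ⟨h, rfl⟩
      · refine Or.inr (Or.inr ⟨rfl, ?_⟩)
        revert hne; fin_cases a <;> fin_cases b <;> decide
    · rintro (⟨rfl, rfl⟩ | ⟨rfl, rfl⟩ | ⟨rfl, rfl⟩)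
      · exact Or.inl ⟨Or.inr rfl, rfl⟩
      · exact Or.inl ⟨Or.inl (sub_add_cancel i 1).symm, rfl⟩
      · refine Or.inr ⟨rfl, ?_⟩
        fin_cases a <;> decide
  rw [vertexSum]
  rw [show (Finset.univ.filter (fun w => (cycleGraph m □ pathGraph 2).Adj (i, a) w)) =
      ({(i + 1, a), (i - 1, a), (i, a + 1)} : Finset (Fin m × Fin 2)) from hfil]
  rw [Finset.sum_insert (by simp [hne1, hne2]), Finset.sum_insert (by simp [hne3]),
    Finset.sum_singleton]
  ring

end Aux

/-- The circular prism `C[m] □ P[2]` (`m ≥ 3`) is antimagic: there is a bijection from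
its `3m` edges to `{1, …, 3m}` with pairwise distinct vertex sums. -/
theorem circularPrism_isAntimagic (m : ℕ) (hm : 3 ≤ m) :
    ∃ f : Sym2 (Fin m × Fin 2) → ℕ,
      Set.BijOn f (cycleGraph m □ pathGraph 2).edgeSet (Set.Icc 1 (3 * m)) ∧
      Function.Injective (vertexSum (cycleGraph m □ pathGraph 2) f) := by
  haveI : NeZero m := ⟨by omega⟩
  set f : Sym2 (Fin m × Fin 2) → ℕ := Sym2.lift ⟨gfun m, gfun_symm hm⟩ with hf
  have hs := gfun_symm hm
  have hev0 : ∀ i : Fin m, f s((i, 0), (i + 1, 0)) = 1 + i.val := by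
    intro i; rw [hf, ev_succ hm hs, if_pos rfl]
  have hev1 : ∀ i : Fin m, f s((i, 1), (i + 1, 1)) = 2 * m + 1 + i.val := by
    intro i; rw [hf, ev_succ hm hs, if_neg (by decide)]
  have hev2 : ∀ i : Fin m, f s((i, 0), (i, 1)) = 2 * m - i.val := by
    intro i; rw [hf, ev_diag hs]
  refine ⟨f, ⟨?_, ?_, ?_⟩, ?_⟩
  · -- MapsTo
    intro e he
    rw [edge_class hm] at he
    obtain ⟨i, h | h | h⟩ := he <;> subst h <;>
      simp only [hev0, hev1, hev2, Set.mem_Icc] <;> have := i.isLt <;> omega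
  · -- InjOn
    intro e1 he1 e2 he2 hfe
    rw [edge_class hm] at he1 he2
    obtain ⟨i, h1 | h1 | h1⟩ := he1 <;> obtain ⟨j, h2 | h2 | h2⟩ := he2 <;>
      subst h1 <;> subst h2 <;>
      simp only [hev0, hev1, hev2] at hfe <;>
      have hi := i.isLt <;> have hj := j.isLt
    · have : i = j := Fin.ext (by omega); rw [this]
    · omega
    · omega
    · omega
    · have : i = j := Fin.ext (by omega); rw [this]
    · omega
    · omega
    · omega
    · have : i = j := Fin.ext (by omega); rw [this]
  · -- SurjOn
    intro k hk
    rw [Set.mem_Icc] at hk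
    rcases Nat.lt_or_ge m k with h1 | h1
    · rcases Nat.lt_or_ge (2 * m) k with h2 | h2
      · -- top edge
        refine ⟨s(((⟨k - (2 * m + 1), by omega⟩ : Fin m), 1),
            ((⟨k - (2 * m + 1), by omega⟩ : Fin m) + 1, 1)), ?_, ?_⟩
        · rw [edge_class hm]; exact ⟨_, Or.inr (Or.inl rfl)⟩
        · rw [hev1]; simp only; omega
      · -- matching edge
        refine ⟨s(((⟨2 * m - k, by omega⟩ : Fin m), 0),
            ((⟨2 * m - k, by omega⟩ : Fin m), 1)), ?_, ?_⟩
        · rw [edge_class hm]; exact ⟨_, Or.inr (Or.inr rfl)⟩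
        · rw [hev2]; simp only; omega
    · -- bottom edge
      refine ⟨s(((⟨k - 1, by omega⟩ : Fin m), 0),
          ((⟨k - 1, by omega⟩ : Fin m) + 1, 0)), ?_, ?_⟩
      · rw [edge_class hm]; exact ⟨_, Or.inl rfl⟩
      · rw [hev0]; simp only; omega
  · -- injectivity of vertex sums
    rintro ⟨i, a⟩ ⟨j, b⟩ h
    rw [vertexSum_eval hm, vertexSum_eval hm, hf] at h
    rw [ev_succ hm hs, ev_pred hm hs, ev_diag hs,
      ev_succ hm hs, ev_pred hm hs, ev_diag hs] at h
    have hi := i.isLt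
    have hj := j.isLt
    have hip : (i - 1).val < m := (i - 1).isLt
    have hjp : (j - 1).val < m := (j - 1).isLt
    have hfin : ∀ c : Fin 2, c = 0 ∨ c = 1 := by decide
    rcases hfin a with rfl | rfl <;> rcases hfin b with rfl | rfl <;>
      simp only [if_pos (rfl : (0 : Fin 2) = 0), if_true, eq_self_iff_true,
        if_neg (show ¬(1 : Fin 2) = 0 by decide)] at h
    · have : i = j := fin_pred_inj hm (by omega); rw [this]
    · omega
    · omega
    · have : i = j := fin_pred_inj hm (by omega); rw [this]
end

section
/- The Cartesian product C[m] × P[n+1] of a cycle on m ≥ 3 vertices and a path on n+1 vertices is antimagic for all n ≥ 2. -/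
open Finset SimpleGraph

/-!
Cut `{1, …, (2n + 1)m}` into `2n + 1` blocks of `m` consecutive labels: block `0` goes to the
cycle edges of the top row `n`, block `j + 1` to the vertical edges between rows `j` and `j + 1`,
and block `n + 1 + j` to the cycle edges of row `j < n`. Inside a block the vertical edges are
ordered by the permutation `zigzag m` of their column (evens up, then odds down) and the cycle
edges `s(i, i + 1)` by its reversal `zigzagRev m i = zigzag m (m - 1 - i)`.

The vertex sum at `(i, j)` is then `rowCoeff n j * m + rowOffset m d i` with `d ∈ {1, 2}` the
number of vertical edges at the vertex and `rowOffset m d i < 4m`. The row coefficients `n` and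
`2n + 3 + 4j` are pairwise at least `4` apart, so a vertex sum determines the row, and within a
row `rowOffset m d` is injective: a closed form of `zigzagRev m (i - 1) + zigzagRev m i` reduces
this to a case check in linear arithmetic.
-/

section Antimagic

variable {V : Type*} [Fintype V] {G : SimpleGraph V}

lemma vertexSum_eq_sum_neighborFinset [DecidableRel G.Adj] (f : Sym2 V → ℕ) (v : V) :
    vertexSum G f v = ∑ w ∈ G.neighborFinset v, f s(v, w) :=
  sum_congr (by ext; simp) fun _ _ => rfl

lemma isAntimagic_of_injOn {f : Sym2 V → ℕ}
    (hmaps : Set.MapsTo f G.edgeSet (Set.Icc 1 G.edgeSet.ncard)) (hinj : Set.InjOn f G.edgeSet)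
    (hsum : Function.Injective (vertexSum G f)) : IsAntimagic G := by
  refine ⟨f, ⟨hmaps, hinj, ?_⟩, hsum⟩
  have himage : f '' G.edgeSet = Set.Icc 1 G.edgeSet.ncard :=
    Set.eq_of_subset_of_ncard_le hmaps.image_subset (by simp [hinj.ncard_image])
  exact himage.symm.subset

end Antimagic

namespace SimpleGraph

variable {α β : Type*} {G : SimpleGraph α} {H : SimpleGraph β}

instance [DecidableEq α] [DecidableEq β] [DecidableRel G.Adj] [DecidableRel H.Adj] :
    DecidableRel (G □ H).Adj :=
  fun _ _ => decidable_of_iff' _ boxProd_adj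

instance (n : ℕ) : DecidableRel (pathGraph n).Adj :=
  fun _ _ => decidable_of_iff' _ pathGraph_adj

lemma card_edgeFinset_boxProd [Fintype α] [Fintype β] [DecidableEq α] [DecidableEq β]
    [DecidableRel G.Adj] [DecidableRel H.Adj] :
    #(G □ H).edgeFinset = Fintype.card β * #G.edgeFinset + Fintype.card α * #H.edgeFinset := by
  have h : 2 * #(G □ H).edgeFinset =
      2 * (Fintype.card β * #G.edgeFinset + Fintype.card α * #H.edgeFinset) :=
    calc 2 * #(G □ H).edgeFinset
      _ = ∑ v : α × β, (G.degree v.1 + H.degree v.2) := by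
        rw [← sum_degrees_eq_twice_card_edges]
        exact sum_congr rfl fun v _ => by convert degree_boxProd v
      _ = ∑ a, ∑ b, (G.degree a + H.degree b) :=
        Fintype.sum_prod_type' (fun a b => G.degree a + H.degree b)
      _ = Fintype.card β * ∑ a, G.degree a + Fintype.card α * ∑ b, H.degree b := by
        simp only [sum_add_distrib, sum_const, card_univ, smul_eq_mul, mul_sum]
      _ = _ := by rw [sum_degrees_eq_twice_card_edges, sum_degrees_eq_twice_card_edges]; ring
  omega

lemma exists_map_of_mem_edgeSet_boxProd {e : Sym2 (α × β)} (he : e ∈ (G □ H).edgeSet) :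
    (∃ b, ∃ e₀ ∈ G.edgeSet, e = e₀.map (·, b)) ∨ (∃ a, ∃ e₀ ∈ H.edgeSet, e = e₀.map (a, ·)) := by
  induction e using Sym2.ind with
  | _ v w =>
    obtain ⟨a, b⟩ := v
    obtain ⟨a', b'⟩ := w
    rcases boxProd_adj.mp he with ⟨hG, rfl : b = b'⟩ | ⟨hH, rfl : a = a'⟩
    · exact Or.inl ⟨b, s(a, a'), hG, rfl⟩
    · exact Or.inr ⟨a, s(b, b'), hH, rfl⟩

lemma card_edgeFinset_cycleGraph (k : ℕ) : #(cycleGraph (k + 3)).edgeFinset = k + 3 := by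
  have h := sum_degrees_eq_twice_card_edges (cycleGraph (k + 3))
  simp only [cycleGraph_degree_three_le, sum_const, card_univ, Fintype.card_fin,
    smul_eq_mul] at h
  omega

lemma exists_eq_mk_add_one_of_mem_edgeSet_cycleGraph {k : ℕ} {e : Sym2 (Fin (k + 2))}
    (he : e ∈ (cycleGraph (k + 2)).edgeSet) : ∃ i, e = s(i, i + 1) := by
  induction e using Sym2.ind with
  | _ a b =>
    rcases (cycleGraph_adj.mp he : a - b = 1 ∨ b - a = 1) with h | h
    · exact ⟨b, by rw [eq_add_of_sub_eq' h, Sym2.eq_swap]⟩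
    · exact ⟨a, by rw [eq_add_of_sub_eq' h]⟩

lemma card_edgeFinset_pathGraph (n : ℕ) : #(pathGraph (n + 1)).edgeFinset = n := by
  have : (pathGraph (n + 1)).edgeFinset = univ.image (fun j : Fin n => s(j.castSucc, j.succ)) := by
    ext e
    induction e using Sym2.ind with
    | _ a b =>
      simp only [mem_edgeFinset, mem_edgeSet, pathGraph_adj, mem_image, mem_univ, true_and,
        Sym2.eq_iff, Fin.ext_iff, Fin.val_castSucc, Fin.val_succ]
      constructor
      · rintro (h | h)
        · exact ⟨⟨a, by omega⟩, Or.inl ⟨rfl, h⟩⟩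
        · exact ⟨⟨b, by omega⟩, Or.inr ⟨rfl, h⟩⟩
      · rintro ⟨j, h | h⟩ <;> omega
  rw [this, card_image_of_injective, card_univ, Fintype.card_fin]
  intro j j' h
  simp only [Sym2.eq_iff, Fin.ext_iff, Fin.val_castSucc, Fin.val_succ] at h
  omega

lemma val_sup_eq_val_inf_add_one_of_mem_edgeSet_pathGraph {n : ℕ} {e : Sym2 (Fin n)}
    (he : e ∈ (pathGraph n).edgeSet) : e.sup.val = e.inf.val + 1 := by
  induction e using Sym2.ind with
  | _ a b =>
    have : a.val + 1 = b.val ∨ b.val + 1 = a.val := pathGraph_adj.mp he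
    simp only [Sym2.sup_mk, Sym2.inf_mk, Fin.coe_max, Fin.coe_min]
    omega

lemma inf_injOn_edgeSet_pathGraph (n : ℕ) : Set.InjOn Sym2.inf (pathGraph n).edgeSet := by
  intro e he e' he' h
  refine Sym2.inf_eq_inf_and_sup_eq_sup.mp ⟨h, Fin.ext ?_⟩
  rw [val_sup_eq_val_inf_add_one_of_mem_edgeSet_pathGraph he,
    val_sup_eq_val_inf_add_one_of_mem_edgeSet_pathGraph he', h]

lemma sum_neighborFinset_pathGraph (n : ℕ) (j : Fin (n + 1)) (g : ℕ → ℕ) :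
    ∑ y ∈ (pathGraph (n + 1)).neighborFinset j, g (s(j, y).inf.val + 1) =
      (if j.val = 0 then 0 else g j) + (if j.val = n then 0 else g (j + 1)) := by
  have hj := j.isLt
  by_cases h₀ : j.val = 0 <;> by_cases hn : j.val = n
  · have : (pathGraph (n + 1)).neighborFinset j = ∅ := by
      ext y; simp only [mem_neighborFinset, pathGraph_adj, notMem_empty, iff_false]; omega
    simp only [this, sum_empty, if_pos h₀, if_pos hn, add_zero]
  · have : (pathGraph (n + 1)).neighborFinset j = {⟨j.val + 1, by omega⟩} := by
      ext y; simp only [mem_neighborFinset, pathGraph_adj, mem_singleton, Fin.ext_iff]; omega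
    rw [this, sum_singleton, if_pos h₀, if_neg hn, zero_add]
    simp
  · have : (pathGraph (n + 1)).neighborFinset j = {⟨j.val - 1, by omega⟩} := by
      ext y; simp only [mem_neighborFinset, pathGraph_adj, mem_singleton, Fin.ext_iff]; omega
    rw [this, sum_singleton, if_neg h₀, if_pos hn, add_zero]
    simp only [Sym2.inf_mk, Fin.coe_min]
    congr 1; omega
  · have : (pathGraph (n + 1)).neighborFinset j =
        {⟨j.val - 1, by omega⟩, ⟨j.val + 1, by omega⟩} := by
      ext y
      simp only [mem_neighborFinset, pathGraph_adj, mem_insert, mem_singleton, Fin.ext_iff]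
      omega
    rw [this, sum_pair (by simp only [ne_eq, Fin.mk.injEq]; omega), if_neg h₀, if_neg hn]
    simp only [Sym2.inf_mk, Fin.coe_min]
    congr 2 <;> omega

end SimpleGraph

section CycleTail

def cycleTail {m : ℕ} (e : Sym2 (Fin m)) : Fin m :=
  if e.sup.val = e.inf.val + 1 then e.inf else e.sup

variable {k : ℕ}

lemma cycleTail_mk_add_one (i : Fin (k + 3)) : cycleTail s(i, i + 1) = i := by
  have h : (i + 1).val = if i.val = k + 2 then 0 else i.val + 1 := by
    rw [Fin.val_add_one]; simp only [Fin.ext_iff, Fin.val_last]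
  rw [cycleTail, Sym2.sup_mk, Sym2.inf_mk]
  split_ifs with hc <;> rw [Fin.ext_iff] <;> rw [Fin.coe_max, Fin.coe_min] at hc
  · rw [Fin.coe_min]; split_ifs at h <;> omega
  · rw [Fin.coe_max]; split_ifs at h <;> omega

lemma cycleTail_mk_sub_one (i : Fin (k + 3)) : cycleTail s(i, i - 1) = i - 1 := by
  have h := cycleTail_mk_add_one (i - 1)
  rwa [sub_add_cancel, Sym2.eq_swap] at h

lemma cycleTail_injOn : Set.InjOn cycleTail (cycleGraph (k + 3)).edgeSet := by
  intro e he e' he' h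
  obtain ⟨i, rfl⟩ := exists_eq_mk_add_one_of_mem_edgeSet_cycleGraph he
  obtain ⟨i', rfl⟩ := exists_eq_mk_add_one_of_mem_edgeSet_cycleGraph he'
  rw [cycleTail_mk_add_one, cycleTail_mk_add_one] at h
  rw [h]

end CycleTail

section BoxLabel

variable {α β M : Type*} [DecidableEq α] [DecidableEq β] [Zero M]

def boxLabel (hor : β → Sym2 α → M) (ver : α → Sym2 β → M) : Sym2 (α × β) → M :=
  Sym2.lift ⟨fun v w => if v.1 = w.1 then ver v.1 s(v.2, w.2)
    else if v.2 = w.2 then hor v.2 s(v.1, w.1) else 0, fun v w => by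
      by_cases h₁ : v.1 = w.1 <;> by_cases h₂ : v.2 = w.2 <;>
        simp [h₁, h₂, Ne.symm, Sym2.eq_swap]⟩

variable {G : SimpleGraph α} {H : SimpleGraph β} (hor : β → Sym2 α → M) (ver : α → Sym2 β → M)

lemma boxLabel_map_left {e : Sym2 α} (he : e ∈ G.edgeSet) (b : β) :
    boxLabel hor ver (e.map (·, b)) = hor b e := by
  induction e using Sym2.ind with
  | _ a a' => simp [boxLabel, G.ne_of_adj he]

lemma boxLabel_map_right (a : α) (e : Sym2 β) : boxLabel hor ver (e.map (a, ·)) = ver a e := by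
  induction e using Sym2.ind with
  | _ b b' => simp [boxLabel]

lemma boxLabel_mapsTo {t : Set M} (hhor : ∀ b, Set.MapsTo (hor b) G.edgeSet t)
    (hver : ∀ a, Set.MapsTo (ver a) H.edgeSet t) :
    Set.MapsTo (boxLabel hor ver) (G □ H).edgeSet t := by
  intro e he
  rcases exists_map_of_mem_edgeSet_boxProd he with ⟨b, e₀, he₀, rfl⟩ | ⟨a, e₀, he₀, rfl⟩
  · rw [boxLabel_map_left hor ver he₀]; exact hhor b he₀
  · rw [boxLabel_map_right]; exact hver a he₀

lemma boxLabel_injOn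
    (hhor : Set.InjOn (fun p : β × Sym2 α => hor p.1 p.2) (Set.univ ×ˢ G.edgeSet))
    (hver : Set.InjOn (fun p : α × Sym2 β => ver p.1 p.2) (Set.univ ×ˢ H.edgeSet))
    (hdisj : ∀ a b, ∀ e ∈ G.edgeSet, ∀ e' ∈ H.edgeSet, hor b e ≠ ver a e') :
    Set.InjOn (boxLabel hor ver) (G □ H).edgeSet := by
  intro e he e' he' h
  rcases exists_map_of_mem_edgeSet_boxProd he with ⟨b, e₀, he₀, rfl⟩ | ⟨a, e₀, he₀, rfl⟩ <;>
    rcases exists_map_of_mem_edgeSet_boxProd he' with ⟨b', e₀', he₀', rfl⟩ | ⟨a', e₀', he₀', rfl⟩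
  · rw [boxLabel_map_left hor ver he₀, boxLabel_map_left hor ver he₀'] at h
    obtain ⟨rfl, rfl⟩ := Prod.ext_iff.mp
      (hhor (Set.mk_mem_prod (Set.mem_univ b) he₀) (Set.mk_mem_prod (Set.mem_univ b') he₀') h)
    rfl
  · rw [boxLabel_map_left hor ver he₀, boxLabel_map_right] at h
    exact absurd h (hdisj _ _ _ he₀ _ he₀')
  · rw [boxLabel_map_right, boxLabel_map_left hor ver he₀'] at h
    exact absurd h.symm (hdisj _ _ _ he₀' _ he₀)
  · rw [boxLabel_map_right, boxLabel_map_right] at h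
    obtain ⟨rfl, rfl⟩ := Prod.ext_iff.mp
      (hver (Set.mk_mem_prod (Set.mem_univ a) he₀) (Set.mk_mem_prod (Set.mem_univ a') he₀') h)
    rfl

lemma vertexSum_boxProd_boxLabel [Fintype α] [Fintype β] [DecidableRel G.Adj]
    [DecidableRel H.Adj] (hor : β → Sym2 α → ℕ) (ver : α → Sym2 β → ℕ) (a : α) (b : β) :
    vertexSum (G □ H) (boxLabel hor ver) (a, b) =
      ∑ x ∈ G.neighborFinset a, hor b s(a, x) + ∑ y ∈ H.neighborFinset b, ver a s(b, y) := by
  rw [vertexSum_eq_sum_neighborFinset, neighborFinset_boxProd, sum_disjUnion, sum_product,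
    sum_product]
  simp only [sum_singleton]
  congr 1
  · exact sum_congr rfl fun x hx =>
      boxLabel_map_left hor ver (e := s(a, x)) ((mem_neighborFinset _ _ _).mp hx) b
  · exact sum_congr rfl fun y _ => boxLabel_map_right hor ver a s(b, y)

end BoxLabel

def zigzag (m i : ℕ) : ℕ := if 2 * i < m then 2 * i else 2 * (m - i) - 1

def zigzagRev (m i : ℕ) : ℕ := if 2 * (m - 1 - i) < m then 2 * (m - 1 - i) else 2 * i + 1

lemma zigzag_lt {m i : ℕ} (hi : i < m) : zigzag m i < m := by
  unfold zigzag; split_ifs <;> omega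

lemma zigzagRev_lt {m i : ℕ} (hi : i < m) : zigzagRev m i < m := by
  unfold zigzagRev; split_ifs <;> omega

lemma zigzag_injOn (m : ℕ) : Set.InjOn (zigzag m) (Set.Iio m) := by
  intro i hi i' hi' h
  simp only [Set.mem_Iio] at hi hi'
  unfold zigzag at h; split_ifs at h <;> omega

lemma zigzagRev_injOn (m : ℕ) : Set.InjOn (zigzagRev m) (Set.Iio m) := by
  intro i hi i' hi' h
  simp only [Set.mem_Iio] at hi hi'
  unfold zigzagRev at h; split_ifs at h <;> omega

lemma zigzagRev_pred_add_zigzagRev {m i : ℕ} (hm : 2 ≤ m) (hi : i < m) :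
    zigzagRev m (if i = 0 then m - 1 else i - 1) + zigzagRev m i =
      if i = 0 then 1
      else if 2 * i + 2 ≤ m then 4 * i
      else if 2 * i ≤ m then 2 * m - 3
      else 4 * (m - i) - 2 := by
  unfold zigzagRev
  split_ifs <;> omega

def rowOffset (m d i : ℕ) : ℕ :=
  zigzagRev m (if i = 0 then m - 1 else i - 1) + zigzagRev m i + d * zigzag m i + d + 2

lemma rowOffset_lt {m d i : ℕ} (hm : 2 ≤ m) (hd : d ≤ 2) (hi : i < m) :
    rowOffset m d i < 4 * m := by
  have hpair : zigzagRev m (if i = 0 then m - 1 else i - 1) + zigzagRev m i ≤ 2 * m - 3 := by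
    rw [zigzagRev_pred_add_zigzagRev hm hi]; split_ifs <;> omega
  have := zigzag_lt hi
  unfold rowOffset
  interval_cases d <;> omega

lemma rowOffset_injOn {m d : ℕ} (hm : 2 ≤ m) (hd : d = 1 ∨ d = 2) :
    Set.InjOn (rowOffset m d) (Set.Iio m) := by
  intro i hi i' hi' h
  simp only [Set.mem_Iio] at hi hi'
  unfold rowOffset at h
  rw [zigzagRev_pred_add_zigzagRev hm hi, zigzagRev_pred_add_zigzagRev hm hi'] at h
  unfold zigzag at h
  rcases hd with rfl | rfl <;> split_ifs at h <;> omega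

lemma mul_add_eq_mul_add_iff {m b b' r r' : ℕ} (hr : r < m) (hr' : r' < m) :
    b * m + r = b' * m + r' ↔ b = b' ∧ r = r' := by
  refine ⟨fun h => ?_, by rintro ⟨rfl, rfl⟩; rfl⟩
  have hm : 0 < m := by omega
  have hdiv := congrArg (· / m) h
  have hmod := congrArg (· % m) h
  simp only [add_comm (_ * m), Nat.add_mul_div_right _ _ hm, Nat.add_mul_mod_self_right,
    Nat.div_eq_of_lt hr, Nat.div_eq_of_lt hr', Nat.mod_eq_of_lt hr, Nat.mod_eq_of_lt hr'] at hdiv hmod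
  omega

lemma lt_add_of_mul_add_eq_mul_add {m a b c t t' : ℕ} (h : a * m + t = b * m + t')
    (ht' : t' < c * m) : a < b + c := by
  by_contra! hle
  have : (b + c) * m ≤ a * m := Nat.mul_le_mul_right m hle
  nlinarith

lemma mul_add_add_one_mem_Icc {m b B r : ℕ} (hb : b ≤ B) (hr : r < m) :
    b * m + r + 1 ∈ Set.Icc 1 ((B + 1) * m) := by
  have : b * m ≤ B * m := Nat.mul_le_mul_right m hb
  constructor <;> nlinarith

section Labeling

def rowBlock (n j : ℕ) : ℕ := if j < n then n + 1 + j else 0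

def cyclePathLabel (m n : ℕ) : Sym2 (Fin m × Fin (n + 1)) → ℕ :=
  boxLabel (fun j e => rowBlock n j * m + zigzagRev m (cycleTail e) + 1)
    (fun i e => (e.inf.val + 1) * m + zigzag m i + 1)

variable {k n : ℕ}

lemma cyclePathLabel_mapsTo :
    Set.MapsTo (cyclePathLabel (k + 3) n) (cycleGraph (k + 3) □ pathGraph (n + 1)).edgeSet
      (Set.Icc 1 ((2 * n + 1) * (k + 3))) := by
  refine boxLabel_mapsTo _ _ (fun j e _ => ?_) (fun i e he => ?_)
  · exact mul_add_add_one_mem_Icc (by unfold rowBlock; split_ifs <;> omega)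
      (zigzagRev_lt (cycleTail e).isLt)
  · have := val_sup_eq_val_inf_add_one_of_mem_edgeSet_pathGraph he
    have := e.sup.isLt
    exact mul_add_add_one_mem_Icc (by omega) (zigzag_lt i.isLt)

lemma cyclePathLabel_injOn :
    Set.InjOn (cyclePathLabel (k + 3) n) (cycleGraph (k + 3) □ pathGraph (n + 1)).edgeSet := by
  refine boxLabel_injOn _ _ ?_ ?_ ?_
  · rintro ⟨j, e⟩ ⟨-, he : e ∈ _⟩ ⟨j', e'⟩ ⟨-, he' : e' ∈ _⟩ h
    dsimp only at h
    obtain ⟨hrow, hcol⟩ := (mul_add_eq_mul_add_iff (zigzagRev_lt (cycleTail e).isLt)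
      (zigzagRev_lt (cycleTail e').isLt)).mp (Nat.add_right_cancel h)
    have hj : j = j' := Fin.ext (by unfold rowBlock at hrow; split_ifs at hrow <;> omega)
    rw [hj, cycleTail_injOn he he'
      (Fin.ext (zigzagRev_injOn _ (cycleTail e).isLt (cycleTail e').isLt hcol))]
  · rintro ⟨i, e⟩ ⟨-, he : e ∈ _⟩ ⟨i', e'⟩ ⟨-, he' : e' ∈ _⟩ h
    dsimp only at h
    obtain ⟨hrow, hcol⟩ := (mul_add_eq_mul_add_iff (zigzag_lt i.isLt) (zigzag_lt i'.isLt)).mp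
      (Nat.add_right_cancel h)
    rw [Fin.ext (zigzag_injOn _ i.isLt i'.isLt hcol),
      inf_injOn_edgeSet_pathGraph _ he he' (Fin.ext (by omega))]
  · intro i j e _ e' he' h
    have := val_sup_eq_val_inf_add_one_of_mem_edgeSet_pathGraph he'
    have := e'.sup.isLt
    have hrow := ((mul_add_eq_mul_add_iff (zigzagRev_lt (cycleTail e).isLt)
      (zigzag_lt i.isLt)).mp (Nat.add_right_cancel h)).1
    unfold rowBlock at hrow; split_ifs at hrow; omega

lemma ncard_edgeSet_cycleGraph_boxProd_pathGraph :
    (cycleGraph (k + 3) □ pathGraph (n + 1)).edgeSet.ncard = (2 * n + 1) * (k + 3) := by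
  rw [← coe_edgeFinset, Set.ncard_coe_finset, card_edgeFinset_boxProd, card_edgeFinset_cycleGraph,
    card_edgeFinset_pathGraph, Fintype.card_fin, Fintype.card_fin]
  ring

def rowCoeff (n j : ℕ) : ℕ := if j = n then n else 2 * n + 3 + 4 * j

lemma vertexSum_cyclePathLabel (hn : 0 < n) (i : Fin (k + 3)) (j : Fin (n + 1)) :
    vertexSum (cycleGraph (k + 3) □ pathGraph (n + 1)) (cyclePathLabel (k + 3) n) (i, j) =
      rowCoeff n j * (k + 3) + rowOffset (k + 3) (if j.val = 0 ∨ j.val = n then 1 else 2) i := by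
  have hne : i - 1 ≠ i + 1 := by
    rw [Ne, Fin.ext_iff, Fin.coe_sub_one, Fin.val_add_one]
    split_ifs with h₁ h₂ h₂ <;> simp only [Fin.ext_iff, Fin.val_zero, Fin.val_last] at h₁ h₂ <;>
      omega
  have hprev : ((i - 1 : Fin (k + 3)) : ℕ) = if (i : ℕ) = 0 then k + 3 - 1 else i - 1 := by
    rw [Fin.coe_sub_one]
    split_ifs with h₁ h₂ h₂ <;> simp only [Fin.ext_iff, Fin.val_zero] at h₁ <;> omega
  have hpath := sum_neighborFinset_pathGraph n j (fun t => t * (k + 3) + zigzag (k + 3) i + 1)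
  rw [cyclePathLabel, vertexSum_boxProd_boxLabel, cycleGraph_neighborFinset (n := k + 1),
    sum_pair hne, cycleTail_mk_sub_one, cycleTail_mk_add_one, hpath, hprev]
  unfold rowOffset rowCoeff rowBlock
  generalize zigzagRev (k + 3) (if (i : ℕ) = 0 then k + 3 - 1 else i - 1) = P
  generalize zigzagRev (k + 3) i = R
  generalize zigzag (k + 3) i = S
  have hj := j.isLt
  generalize (j : ℕ) = J at hj ⊢
  split_ifs <;> subst_vars <;> first | omega | ring

lemma vertexSum_cyclePathLabel_injective (hn : 0 < n) :
    Function.Injective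
      (vertexSum (cycleGraph (k + 3) □ pathGraph (n + 1)) (cyclePathLabel (k + 3) n)) := by
  rintro ⟨i, j⟩ ⟨i', j'⟩ h
  rw [vertexSum_cyclePathLabel hn, vertexSum_cyclePathLabel hn] at h
  have hd (j : Fin (n + 1)) : (if j.val = 0 ∨ j.val = n then 1 else 2) ≤ 2 := by
    split_ifs <;> omega
  have h₁ := lt_add_of_mul_add_eq_mul_add h (rowOffset_lt (by omega) (hd j') i'.isLt)
  have h₂ := lt_add_of_mul_add_eq_mul_add h.symm (rowOffset_lt (by omega) (hd j) i.isLt)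
  have hj : j = j' := Fin.ext (by unfold rowCoeff at h₁ h₂; split_ifs at h₁ h₂ <;> omega)
  subst hj
  have hi : i = i' := Fin.ext (rowOffset_injOn (by omega) (by split_ifs <;> simp) i.isLt i'.isLt
    (Nat.add_left_cancel h))
  rw [hi]

end Labeling

/-- `C[m] □ P[n+1]` is antimagic for all `m ≥ 3`, `n ≥ 2`. -/
theorem cyclePathProd_isAntimagic (m n : ℕ) (hm : 3 ≤ m) (hn : 2 ≤ n) :
    IsAntimagic (cycleGraph m □ pathGraph (n + 1)) := by
  obtain ⟨k, rfl⟩ : ∃ k, m = k + 3 := ⟨m - 3, by omega⟩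
  refine isAntimagic_of_injOn ?_ cyclePathLabel_injOn
    (vertexSum_cyclePathLabel_injective (by omega))
  rw [ncard_edgeSet_cycleGraph_boxProd_pathGraph]
  exact cyclePathLabel_mapsTo
end

section
/- In the two-phase labeling of the lattice grid P_1[m+1] × P_2[n+1] with n ≥ m ≥ 2 (even labels 2,4,...,2mn+2m on the P_1-direction edges arranged in alternating usual/reversed column order, and the remaining labels placed in increasing merged order along the P_2-direction edges), every interior vertex sum f⁺(u_i, v_j) with 1 ≤ i ≤ m+1, 2 ≤ j ≤ n (and j ≤ n-2t when i = m+1, where t is the number of even labels exceeding 2mn+2m) is an even number, while every remaining vertex sum is odd. -/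
open Finset SimpleGraph

/-- The lattice grid `P_1[m+1] □ P_2[n+1]`, where `P_1` carries the re-indexed edge set
and `P_2[n+1]` is the usual path `v_1 v_2 … v_{n+1}`. -/
def latticeGrid (m n : ℕ) : SimpleGraph (Fin (m + 1) × Fin (n + 1)) :=
  reindexedPath m □ pathGraph (n + 1)

/-- The smaller endpoint (0-based) of the `i`-th edge (1-based) of `P_1[m+1]` in the
order `u_1u_3, u_2u_4, …, u_{m-1}u_{m+1}, u_mu_{m+1}`. -/
def edgeFst (m i : ℕ) : ℕ := if i = m then m - 1 else i - 1

/-- The larger endpoint (0-based) of the `i`-th edge (1-based) of `P_1[m+1]`. -/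
def edgeSnd (m i : ℕ) : ℕ := if i = m then m else i + 1

/-- The position (1-based) of the `i`-th edge of `P_1[m+1]` along the path traversal
`u_1, u_3, u_5, …, u_4, u_2`; the edge is marked `U` when this position is odd and `R`
when it is even, so that `u_1u_3` is marked `U` and edges sharing a vertex get
different marks. -/
def edgePos (m i : ℕ) : ℕ :=
  if i = m then m / 2 + 1 else if i % 2 = 1 then (i + 1) / 2 else m + 1 - i / 2

/-- Phase 1 label of the copy of the `i`-th edge of `P_1[m+1]` (1-based, `1 ≤ i ≤ m`) in
column `j` (1-based, `1 ≤ j ≤ n+1`): the `i`-th block of even numbers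
`2(i-1)(n+1)+2, …, 2i(n+1)` is distributed over the columns in usual order for a
`U`-edge and in reversed order for an `R`-edge. -/
def lab1 (m n i j : ℕ) : ℕ :=
  2 * (i - 1) * (n + 1) + (if edgePos m i % 2 = 1 then 2 * j else 2 * (n + 2 - j))

/-- `t`: the number of even numbers in `{2mn+2m+1, …, 2mn+m+n}` (the even labels not
used in Phase 1). -/
def tval (m n : ℕ) : ℕ :=
  ((Finset.Icc (2 * m * n + 2 * m + 1) (2 * m * n + m + n)).filter (fun x => Even x)).card

/-- `s`: the number of odd numbers in `{1, …, 2mn+m+n}` (so `s + t = mn + n`). -/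
def sval (m n : ℕ) : ℕ := m * n + n - tval m n

/-- The merged sequence `C : c_1, …, c_{mn+n}` obtained from the odd numbers
`a_1 < … < a_s` of `{1, …, 2mn+m+n}` and the unused even numbers `b_1 < … < b_t` by the
pattern `a_1, …, a_{s-t}, b_1, a_{s-t+1}, b_2, …, b_t, a_s`. -/
def cseq (m n k : ℕ) : ℕ :=
  if k ≤ sval m n - tval m n then 2 * k - 1
  else if (k - (sval m n - tval m n)) % 2 = 1 then
    2 * m * n + 2 * m + 2 * ((k - (sval m n - tval m n) + 1) / 2)
  else 2 * (sval m n - tval m n + (k - (sval m n - tval m n)) / 2) - 1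

lemma tval_eq (m n : ℕ) (h : m ≤ n) : tval m n = (n - m) / 2 := by
  unfold tval
  have hab : 2 * m * n + m + n = 2 * (m * n + m) + (n - m) := by
    have h2 : 2 * m * n = 2 * (m * n) := by ring
    omega
  have hab2 : 2 * m * n + 2 * m = 2 * (m * n + m) := by ring
  rw [hab, hab2]
  generalize m * n + m = B
  have himg : ((Finset.Icc (2 * B + 1) (2 * B + (n - m))).filter (fun x => Even x))
      = (Finset.Icc 1 ((n - m) / 2)).image (fun k => 2 * B + 2 * k) := by
    ext x
    simp only [Finset.mem_filter, Finset.mem_Icc, Finset.mem_image, Nat.even_iff]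
    constructor
    · rintro ⟨⟨h1, h2⟩, h3⟩
      exact ⟨(x - 2 * B) / 2, by omega, by omega⟩
    · rintro ⟨k, ⟨hk1, hk2⟩, rfl⟩
      omega
  rw [himg, Finset.card_image_of_injective _ (fun a b hab => by simp at hab; omega),
    Nat.card_Icc]
  omega

lemma lab1_even (m n i j : ℕ) : Even (lab1 m n i j) := by
  unfold lab1
  split
  · exact ⟨(i - 1) * (n + 1) + j, by ring⟩
  · exact ⟨(i - 1) * (n + 1) + (n + 2 - j), by ring⟩

lemma horiz_classify (m : ℕ) (hm : 2 ≤ m) (a c : Fin (m + 1))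
    (h : (reindexedPath m).Adj a c) :
    ∃ i, 1 ≤ i ∧ i ≤ m ∧
      ((edgeFst m i = (a : ℕ) ∧ edgeSnd m i = (c : ℕ)) ∨
       (edgeFst m i = (c : ℕ) ∧ edgeSnd m i = (a : ℕ))) := by
  rw [reindexedPath, fromRel_adj] at h
  obtain ⟨hne, h | h⟩ := h
  · rcases h with h | ⟨h1, h2⟩
    · refine ⟨(a : ℕ) + 1, by omega, by have := c.isLt; omega, Or.inl ?_⟩
      have hc := c.isLt
      unfold edgeFst edgeSnd
      constructor <;> (split <;> omega)
    · exact ⟨m, by omega, le_refl m, Or.inl (by unfold edgeFst edgeSnd; simp [h1, h2])⟩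
  · rcases h with h | ⟨h1, h2⟩
    · refine ⟨(c : ℕ) + 1, by omega, by have := a.isLt; omega, Or.inr ?_⟩
      have ha := a.isLt
      unfold edgeFst edgeSnd
      constructor <;> (split <;> omega)
    · exact ⟨m, by omega, le_refl m, Or.inr (by unfold edgeFst edgeSnd; simp [h1, h2])⟩

lemma cseq_odd_iff (m n k : ℕ) (hk : 1 ≤ k) (hD : 1 ≤ sval m n - tval m n) :
    (Odd (cseq m n k) ↔
      (k ≤ sval m n - tval m n ∨ (k - (sval m n - tval m n)) % 2 = 0)) := by
  unfold cseq
  have h2 : 2 * m * n = 2 * (m * n) := by ring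
  split_ifs with h1 hodd <;> rw [Nat.odd_iff] <;> omega

open scoped Classical in
lemma vertexSum_split (m n : ℕ) (f : Sym2 (Fin (m + 1) × Fin (n + 1)) → ℕ)
    (a : Fin (m + 1)) (b : Fin (n + 1)) :
    vertexSum (latticeGrid m n) f (a, b) =
      (∑ c ∈ univ.filter (fun c => (reindexedPath m).Adj a c), f s((a, b), (c, b))) +
      (∑ d ∈ univ.filter (fun d => (pathGraph (n + 1)).Adj b d), f s((a, b), (a, d))) := by
  unfold vertexSum
  have hset : (univ.filter (fun w => (latticeGrid m n).Adj (a, b) w)) =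
      ((univ.filter (fun c => (reindexedPath m).Adj a c)).image (fun c => (c, b))) ∪
      ((univ.filter (fun d => (pathGraph (n + 1)).Adj b d)).image (fun d => (a, d))) := by
    ext w
    simp only [latticeGrid, boxProd_adj, Finset.mem_filter, Finset.mem_union,
      Finset.mem_image, Finset.mem_univ, true_and]
    constructor
    · rintro (⟨hadj, heq⟩ | ⟨hadj, heq⟩)
      · exact Or.inl ⟨w.1, hadj, by rw [heq]⟩
      · exact Or.inr ⟨w.2, hadj, by rw [heq]⟩
    · rintro (⟨c, hadj, rfl⟩ | ⟨d, hadj, rfl⟩)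
      · exact Or.inl ⟨hadj, rfl⟩
      · exact Or.inr ⟨hadj, rfl⟩
  rw [hset, Finset.sum_union, Finset.sum_image, Finset.sum_image]
  · intro x _ y _ h; simpa using h
  · intro x _ y _ h; simpa using h
  · rw [Finset.disjoint_left]
    rintro w hw1 hw2
    simp only [Finset.mem_image, Finset.mem_filter, Finset.mem_univ, true_and] at hw1 hw2
    obtain ⟨c, hc, rfl⟩ := hw1
    obtain ⟨d, hd, h⟩ := hw2
    have := hc.ne'
    simp [Prod.ext_iff] at h
    exact this h.1.symm

lemma pg_filter_mid {N : ℕ} (b x y : Fin (N + 1))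
    (hx : (x : ℕ) + 1 = (b : ℕ)) (hy : (b : ℕ) + 1 = (y : ℕ))
    [DecidablePred (fun b' => (pathGraph (N + 1)).Adj b b')] :
    (univ.filter (fun b' => (pathGraph (N + 1)).Adj b b')) = {x, y} := by
  ext b'
  simp only [Finset.mem_filter, Finset.mem_univ, true_and, pathGraph_adj,
    Finset.mem_insert, Finset.mem_singleton, Fin.ext_iff]
  omega

lemma pg_filter_left {N : ℕ} (b x : Fin (N + 1)) (hb : (b : ℕ) = 0) (hx : (x : ℕ) = 1)
    [DecidablePred (fun b' => (pathGraph (N + 1)).Adj b b')] :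
    (univ.filter (fun b' => (pathGraph (N + 1)).Adj b b')) = {x} := by
  ext b'
  simp only [Finset.mem_filter, Finset.mem_univ, true_and, pathGraph_adj,
    Finset.mem_singleton, Fin.ext_iff]
  omega

lemma pg_filter_right {N : ℕ} (b x : Fin (N + 1)) (hb : (b : ℕ) = N) (hx : (x : ℕ) + 1 = N)
    [DecidablePred (fun b' => (pathGraph (N + 1)).Adj b b')] :
    (univ.filter (fun b' => (pathGraph (N + 1)).Adj b b')) = {x} := by
  ext b'
  simp only [Finset.mem_filter, Finset.mem_univ, true_and, pathGraph_adj,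
    Finset.mem_singleton, Fin.ext_iff]
  omega

/-- In the two-phase labeling of `P_1[m+1] □ P_2[n+1]` (`n ≥ m ≥ 2`) — Phase 1 places
the even labels `2, 4, …, 2mn+2m` on the `P_1`-direction edges in alternating
usual/reversed column order, and Phase 2 places the remaining labels, merged in
increasing order as the sequence `c`, along the `P_2`-direction edges — every interior
vertex sum `f⁺(u_i, v_j)` with `1 ≤ i ≤ m+1`, `2 ≤ j ≤ n` (and moreover `j ≤ n - 2t`
when `i = m+1`) is even, while every remaining vertex sum is odd. -/
theorem latticeGrid_two_phase_parity (m n : ℕ) (hm : 2 ≤ m) (hmn : m ≤ n)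
    (f : Sym2 (Fin (m + 1) × Fin (n + 1)) → ℕ)
    (hf1 : ∀ i j : ℕ, ∀ _hi1 : 1 ≤ i, ∀ _hi2 : i ≤ m, ∀ _hj1 : 1 ≤ j, ∀ _hj2 : j ≤ n + 1,
      f s(((⟨edgeFst m i, by unfold edgeFst; split <;> omega⟩ : Fin (m + 1)),
           (⟨j - 1, by omega⟩ : Fin (n + 1))),
          ((⟨edgeSnd m i, by unfold edgeSnd; split <;> omega⟩ : Fin (m + 1)),
           (⟨j - 1, by omega⟩ : Fin (n + 1)))) = lab1 m n i j)
    (hf2 : ∀ i j : ℕ, ∀ _hi1 : 1 ≤ i, ∀ _hi2 : i ≤ m + 1, ∀ _hj1 : 1 ≤ j, ∀ _hj2 : j ≤ n,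
      f s(((⟨i - 1, by omega⟩ : Fin (m + 1)), (⟨j - 1, by omega⟩ : Fin (n + 1))),
          ((⟨i - 1, by omega⟩ : Fin (m + 1)), (⟨j, by omega⟩ : Fin (n + 1)))) =
        cseq m n ((i - 1) * n + j)) :
    (∀ i j : ℕ, ∀ _hi1 : 1 ≤ i, ∀ _hi2 : i ≤ m + 1, ∀ _hj1 : 2 ≤ j, ∀ _hj2 : j ≤ n,
      (i = m + 1 → j ≤ n - 2 * tval m n) →
      Even (vertexSum (latticeGrid m n) f (⟨i - 1, by omega⟩, ⟨j - 1, by omega⟩))) ∧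
    (∀ i j : ℕ, ∀ _hi1 : 1 ≤ i, ∀ _hi2 : i ≤ m + 1, ∀ _hj1 : 1 ≤ j, ∀ _hj2 : j ≤ n + 1,
      ¬(2 ≤ j ∧ j ≤ n ∧ (i = m + 1 → j ≤ n - 2 * tval m n)) →
      Odd (vertexSum (latticeGrid m n) f (⟨i - 1, by omega⟩, ⟨j - 1, by omega⟩))) := by
  classical
  have ht : tval m n = (n - m) / 2 := tval_eq m n hmn
  have hD2 : sval m n - tval m n = m * n + n - 2 * tval m n := by
    unfold sval; omega
  set D := sval m n - tval m n with hDdef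
  have hD1 : m * n + m ≤ D := by omega
  have hDn : D = m * n + (n - 2 * tval m n) := by omega
  have hD0 : 1 ≤ D := by omega
  -- horizontal sums are even
  have hHeven : ∀ (a : Fin (m + 1)) (b : Fin (n + 1)),
      Even (∑ c ∈ univ.filter (fun c => (reindexedPath m).Adj a c), f s((a, b), (c, b))) := by
    intro a b
    apply Finset.even_sum
    intro c hc
    rw [Finset.mem_filter] at hc
    obtain ⟨i, hi1, hi2, hcase | hcase⟩ := horiz_classify m hm a c hc.2
    · have e := hf1 i ((b : ℕ) + 1) hi1 hi2 (by omega) (by have := b.isLt; omega)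
      simp only [Nat.add_sub_cancel, hcase.1, hcase.2, Fin.eta] at e
      rw [e]
      exact lab1_even m n i ((b : ℕ) + 1)
    · have e := hf1 i ((b : ℕ) + 1) hi1 hi2 (by omega) (by have := b.isLt; omega)
      simp only [Nat.add_sub_cancel, hcase.1, hcase.2, Fin.eta] at e
      rw [Sym2.eq_swap] at e
      rw [e]
      exact lab1_even m n i ((b : ℕ) + 1)
  -- bounds on row sums
  have hrow : ∀ i : ℕ, 1 ≤ i → i ≤ m → (i - 1) * n + n ≤ m * n := by
    intro i h1 h2
    calc (i - 1) * n + n = ((i - 1) + 1) * n := by ring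
    _ ≤ m * n := Nat.mul_le_mul_right n (by omega)
  constructor
  · -- interior vertices: even
    intro i j hi1 hi2 hj1 hj2 hlast
    rw [vertexSum_split]
    refine (hHeven _ _).add ?_
    rw [pg_filter_mid _ (⟨j - 1 - 1, by omega⟩ : Fin (n + 1)) (⟨j, by omega⟩ : Fin (n + 1))
        (by show j - 1 - 1 + 1 = j - 1; omega) (by show j - 1 + 1 = j; omega),
      Finset.sum_pair (by simp only [ne_eq, Fin.mk.injEq]; omega)]
    have e1 := hf2 i (j - 1) hi1 hi2 (by omega) (by omega)
    rw [Sym2.eq_swap] at e1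
    have e2 := hf2 i j hi1 hi2 (by omega) (by omega)
    rw [e1, e2]
    -- both labels odd
    have hb : (i - 1) * n + j ≤ D := by
      by_cases hi : i ≤ m
      · have := hrow i hi1 hi
        omega
      · have hi' : i - 1 = m := by omega
        rw [hi']
        have := hlast (by omega)
        omega
    refine Odd.add_odd ?_ ?_
    · exact (cseq_odd_iff m n _ (by omega) hD0).mpr (Or.inl (by omega))
    · exact (cseq_odd_iff m n _ (by omega) hD0).mpr (Or.inl hb)
  · -- remaining vertices: odd
    intro i j hi1 hi2 hj1 hj2 hnot
    rw [vertexSum_split]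
    refine (hHeven _ _).add_odd ?_
    by_cases h1 : j = 1
    · subst h1
      rw [pg_filter_left _ (⟨1, by omega⟩ : Fin (n + 1)) rfl rfl, Finset.sum_singleton]
      have e := hf2 i 1 hi1 hi2 (by omega) (by omega)
      rw [e]
      refine (cseq_odd_iff m n _ (by omega) hD0).mpr (Or.inl ?_)
      by_cases hi : i ≤ m
      · have := hrow i hi1 hi; omega
      · have hii : i - 1 = m := by omega
        rw [hii]; omega
    · by_cases h2 : j = n + 1
      · subst h2
        simp only [Nat.add_sub_cancel]
        rw [pg_filter_right _ (⟨n - 1, by omega⟩ : Fin (n + 1)) rfl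
          (by show n - 1 + 1 = n; omega), Finset.sum_singleton]
        have e := hf2 i n hi1 hi2 (by omega) (le_refl n)
        rw [Sym2.eq_swap] at e
        rw [e]
        refine (cseq_odd_iff m n _ (by omega) hD0).mpr ?_
        by_cases hi : i ≤ m
        · exact Or.inl (by have := hrow i hi1 hi; omega)
        · have hi' : i - 1 = m := by omega
          rw [hi']
          omega
      · -- 2 ≤ j ≤ n, i = m+1 and j > n - 2t
        push_neg at hnot
        obtain ⟨hi', hjgt⟩ := hnot (by omega) (by omega)
        have hii : i - 1 = m := by omega
        rw [pg_filter_mid _ (⟨j - 1 - 1, by omega⟩ : Fin (n + 1)) (⟨j, by omega⟩ : Fin (n + 1))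
            (by show j - 1 - 1 + 1 = j - 1; omega) (by show j - 1 + 1 = j; omega),
          Finset.sum_pair (by simp only [ne_eq, Fin.mk.injEq]; omega)]
        have e1 := hf2 i (j - 1) hi1 hi2 (by omega) (by omega)
        rw [Sym2.eq_swap] at e1
        have e2 := hf2 i j hi1 hi2 (by omega) (by omega)
        rw [e1, e2, hii]
        have hiff : ((m * n + (j - 1)) ≤ D ∨ ((m * n + (j - 1)) - D) % 2 = 0) ↔
            ¬((m * n + j) ≤ D ∨ ((m * n + j) - D) % 2 = 0) := by
          omega
        by_cases hc : (m * n + (j - 1)) ≤ D ∨ ((m * n + (j - 1)) - D) % 2 = 0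
        · refine Odd.add_even ((cseq_odd_iff m n _ (by omega) hD0).mpr hc) ?_
          rw [← Nat.not_odd_iff_even, cseq_odd_iff m n _ (by omega) hD0]
          exact hiff.mp hc
        · refine Even.add_odd ?_ ((cseq_odd_iff m n _ (by omega) hD0).mpr (by tauto))
          rw [← Nat.not_odd_iff_even, cseq_odd_iff m n _ (by omega) hD0]
          exact hc
end
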